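/- arXiv:1710.03487 — 8 statements merged into one kernel-verified Lean document; each statement's English description precedes it below -/
import Mathlib

section
/- Let X be an m×n real matrix, U an m×d matrix with columns u_1,…,u_d, V an n×d matrix with columns v_1,…,v_d, and let r = (r_1,…,r_d) be i.i.d. Bernoulli(θ) random variables with 0 < θ ≤ 1. Then E_r ‖X − (1/θ) U diag(r) Vᵀ‖_F² = ‖X − U Vᵀ‖_F² + ((1−θ)/θ) Σ_{k=1}^d ‖u_k‖₂² ‖v_k‖₂². -/
open Matrix

open Finset in
lemma dropout_sum_w {d : ℕ} (f : Fin d → Bool → ℝ) :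
    ∑ r : Fin d → Bool, ∏ k, f k (r k) = ∏ k, (f k false + f k true) := by
  rw [← Fintype.piFinset_univ, ← Finset.prod_univ_sum]
  simp [Fintype.sum_bool, add_comm]

open Finset in
lemma dropout_moment2 {d : ℕ} (θ : ℝ) (k l : Fin d) :
    ∑ r : Fin d → Bool, (∏ p, if r p then θ else 1 - θ) *
      ((if r k then (1:ℝ) else 0) * (if r l then (1:ℝ) else 0))
    = if k = l then θ else θ^2 := by
  have h1 : ∀ r : Fin d → Bool, (∏ p, if r p then θ else 1 - θ) *
      ((if r k then (1:ℝ) else 0) * (if r l then (1:ℝ) else 0))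
      = ∏ p, (if r p then θ else 1 - θ) *
          ((if k = p then (if r p then (1:ℝ) else 0) else 1) *
           (if l = p then (if r p then (1:ℝ) else 0) else 1)) := by
    intro r
    simp only [Finset.prod_mul_distrib, Finset.prod_ite_eq, mem_univ, if_true]
  rw [Finset.sum_congr rfl (fun r _ => h1 r),
    dropout_sum_w (fun p b => (if b then θ else 1 - θ) *
          ((if k = p then (if b then (1:ℝ) else 0) else 1) *
           (if l = p then (if b then (1:ℝ) else 0) else 1)))]
  have h2 : ∀ p : Fin d, ((if (false:Bool) then θ else 1 - θ) *
          ((if k = p then (if (false:Bool) then (1:ℝ) else 0) else 1) *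
           (if l = p then (if (false:Bool) then (1:ℝ) else 0) else 1))) +
      ((if (true:Bool) then θ else 1 - θ) *
          ((if k = p then (if (true:Bool) then (1:ℝ) else 0) else 1) *
           (if l = p then (if (true:Bool) then (1:ℝ) else 0) else 1)))
      = (if k = p ∨ l = p then θ else 1) := by
    intro p
    by_cases hk : k = p <;> by_cases hl : l = p <;> simp [hk, hl]
  rw [Finset.prod_congr rfl (fun p _ => h2 p)]
  by_cases hkl : k = l
  · subst hkl
    simp [Finset.prod_ite_eq]
  · have : ∀ p : Fin d, (if k = p ∨ l = p then θ else 1)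
        = (if k = p then θ else 1) * (if l = p then θ else 1) := by
      intro p
      by_cases hk : k = p <;> by_cases hl : l = p <;> simp_all
    rw [Finset.prod_congr rfl (fun p _ => this p), Finset.prod_mul_distrib]
    simp [Finset.prod_ite_eq, hkl, sq]

open Finset in
lemma dropout_moment1 {d : ℕ} (θ : ℝ) (k : Fin d) :
    ∑ r : Fin d → Bool, (∏ p, if r p then θ else 1 - θ) *
      (if r k then (1:ℝ) else 0) = θ := by
  have h := dropout_moment2 θ k k
  rw [if_pos rfl] at h
  refine Eq.trans (Finset.sum_congr rfl fun r _ => ?_) h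
  by_cases hr : r k <;> simp [hr]

open Finset in
lemma dropout_moment0 {d : ℕ} (θ : ℝ) :
    ∑ r : Fin d → Bool, (∏ p, if r p then θ else 1 - θ) = 1 := by
  rw [dropout_sum_w (fun p b => if b then θ else 1 - θ)]
  simp

open Finset in
lemma dropout_entry_exp {d : ℕ} {θ : ℝ} (hθ : θ ≠ 0) (a : ℝ) (c : Fin d → ℝ) :
    ∑ r : Fin d → Bool, (∏ p, if r p then θ else 1 - θ) *
      (a - (1/θ) * ∑ k, (if r k then (1:ℝ) else 0) * c k)^2
    = (a - ∑ k, c k)^2 + ((1-θ)/θ) * ∑ k, (c k)^2 := by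
  have m0 := dropout_moment0 (d := d) θ
  have m1 := dropout_moment1 (d := d) θ
  have m2 := dropout_moment2 (d := d) θ
  have key : ∀ r : Fin d → Bool,
      (∏ p, if r p then θ else 1 - θ) *
        (a - (1/θ) * ∑ k, (if r k then (1:ℝ) else 0) * c k)^2
      = a^2 * (∏ p, if r p then θ else 1 - θ)
        - (2*a/θ) * ∑ k, ((∏ p, if r p then θ else 1 - θ) * (if r k then (1:ℝ) else 0)) * c k
        + (1/θ^2) * ∑ k, ∑ l, ((∏ p, if r p then θ else 1 - θ) *
            ((if r k then (1:ℝ) else 0) * (if r l then (1:ℝ) else 0))) * (c k * c l) := by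
    intro r
    set w := ∏ p, if r p then θ else 1 - θ with hw
    have h1 : w * ∑ k, (if r k then (1:ℝ) else 0) * c k
        = ∑ k, (w * (if r k then (1:ℝ) else 0)) * c k := by
      rw [Finset.mul_sum]; exact Finset.sum_congr rfl fun k _ => by ring
    have h2 : w * (∑ k, (if r k then (1:ℝ) else 0) * c k)^2
        = ∑ k, ∑ l, (w * ((if r k then (1:ℝ) else 0) * (if r l then (1:ℝ) else 0)))
            * (c k * c l) := by
      rw [sq, Finset.sum_mul_sum, Finset.mul_sum]
      refine Finset.sum_congr rfl fun k _ => ?_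
      rw [Finset.mul_sum]
      exact Finset.sum_congr rfl fun l _ => by ring
    calc w * (a - (1/θ) * ∑ k, (if r k then (1:ℝ) else 0) * c k)^2
        = a^2 * w - (2*a/θ) * (w * ∑ k, (if r k then (1:ℝ) else 0) * c k)
            + (1/θ^2) * (w * (∑ k, (if r k then (1:ℝ) else 0) * c k)^2) := by
          field_simp
          ring
      _ = _ := by rw [h1, h2]
  rw [Finset.sum_congr rfl (fun r _ => key r), Finset.sum_add_distrib,
    Finset.sum_sub_distrib, ← Finset.mul_sum, m0, ← Finset.mul_sum, ← Finset.mul_sum]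
  rw [Finset.sum_comm]
  have hB : ∑ k : Fin d, ∑ r : Fin d → Bool,
      ((∏ p, if r p then θ else 1 - θ) * (if r k then (1:ℝ) else 0)) * c k
      = θ * ∑ k, c k := by
    rw [Finset.mul_sum]
    refine Finset.sum_congr rfl fun k _ => ?_
    rw [← Finset.sum_mul, m1 k]
  rw [hB]
  have hC : ∑ r : Fin d → Bool, ∑ k : Fin d, ∑ l : Fin d,
      ((∏ p, if r p then θ else 1 - θ) *
        ((if r k then (1:ℝ) else 0) * (if r l then (1:ℝ) else 0))) * (c k * c l)
      = θ^2 * ((∑ k, c k) * (∑ l, c l)) + (θ - θ^2) * ∑ k, (c k)^2 := by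
    rw [Finset.sum_comm]
    have step1 : ∀ k : Fin d, ∑ r : Fin d → Bool, ∑ l : Fin d,
        ((∏ p, if r p then θ else 1 - θ) *
          ((if r k then (1:ℝ) else 0) * (if r l then (1:ℝ) else 0))) * (c k * c l)
        = ∑ l, (if k = l then θ else θ^2) * (c k * c l) := by
      intro k
      rw [Finset.sum_comm]
      refine Finset.sum_congr rfl fun l _ => ?_
      rw [← Finset.sum_mul, m2 k l]
    rw [Finset.sum_congr rfl (fun k _ => step1 k)]
    have step2 : ∀ k l : Fin d, (if k = l then θ else θ^2) * (c k * c l)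
        = θ^2 * (c k * c l) + (if k = l then (θ - θ^2) * (c k * c l) else 0) := by
      intro k l; by_cases h : k = l
      · simp [h]; ring
      · simp [h]
    simp only [step2, Finset.sum_add_distrib]
    congr 1
    · rw [Finset.sum_mul_sum, Finset.mul_sum]
      exact Finset.sum_congr rfl fun k _ => by rw [Finset.mul_sum]
    · rw [Finset.mul_sum]
      refine Finset.sum_congr rfl fun k _ => ?_
      rw [Finset.sum_ite_eq, if_pos (Finset.mem_univ k)]
      ring
  rw [hC]
  field_simp
  ring

/-- Dropout criterion for matrix factorization: the expected squared Frobenius loss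
under i.i.d. Bernoulli(θ) dropout of the columns equals the deterministic loss plus
the regularizer `((1-θ)/θ) Σ_k ‖u_k‖² ‖v_k‖²`.  The expectation over the Bernoulli
vector `r` is written as a weighted sum over all `r : Fin d → Bool`. -/
theorem dropout_expectation_eq {m n d : ℕ} (θ : ℝ) (hθ0 : 0 < θ) (hθ1 : θ ≤ 1)
    (X : Matrix (Fin m) (Fin n) ℝ) (U : Matrix (Fin m) (Fin d) ℝ)
    (V : Matrix (Fin n) (Fin d) ℝ) :
    (∑ r : Fin d → Bool,
        (∏ k, if r k then θ else 1 - θ) *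
          ∑ i, ∑ j,
            ((X - (1 / θ) •
                (U * Matrix.diagonal (fun k => if r k then (1 : ℝ) else 0) * Vᵀ)) i j) ^ 2) =
      (∑ i, ∑ j, ((X - U * Vᵀ) i j) ^ 2) +
        ((1 - θ) / θ) * ∑ k, (∑ i, (U i k) ^ 2) * (∑ j, (V j k) ^ 2) := by
  have hθ : θ ≠ 0 := ne_of_gt hθ0
  have hentry : ∀ (r : Fin d → Bool) (i : Fin m) (j : Fin n),
      ((X - (1 / θ) •
          (U * Matrix.diagonal (fun k => if r k then (1 : ℝ) else 0) * Vᵀ)) i j)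
      = X i j - (1/θ) * ∑ k, (if r k then (1:ℝ) else 0) * (U i k * V j k) := by
    intro r i j
    rw [Matrix.sub_apply, Matrix.smul_apply, smul_eq_mul]
    congr 1
    congr 1
    rw [Matrix.mul_apply]
    refine Finset.sum_congr rfl fun k _ => ?_
    rw [Matrix.mul_diagonal, Matrix.transpose_apply]
    ring
  have step1 : (∑ r : Fin d → Bool,
      (∏ k, if r k then θ else 1 - θ) *
        ∑ i, ∑ j,
          ((X - (1 / θ) •
              (U * Matrix.diagonal (fun k => if r k then (1 : ℝ) else 0) * Vᵀ)) i j) ^ 2)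
      = ∑ i, ∑ j, ∑ r : Fin d → Bool,
          (∏ k, if r k then θ else 1 - θ) *
            (X i j - (1/θ) * ∑ k, (if r k then (1:ℝ) else 0) * (U i k * V j k)) ^ 2 := by
    calc (∑ r : Fin d → Bool,
        (∏ k, if r k then θ else 1 - θ) *
          ∑ i, ∑ j,
            ((X - (1 / θ) •
                (U * Matrix.diagonal (fun k => if r k then (1 : ℝ) else 0) * Vᵀ)) i j) ^ 2)
        = ∑ r : Fin d → Bool, ∑ i, ∑ j,
            (∏ k, if r k then θ else 1 - θ) *
              (X i j - (1/θ) * ∑ k, (if r k then (1:ℝ) else 0) * (U i k * V j k)) ^ 2 := by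
          refine Finset.sum_congr rfl fun r _ => ?_
          rw [Finset.mul_sum]
          refine Finset.sum_congr rfl fun i _ => ?_
          rw [Finset.mul_sum]
          refine Finset.sum_congr rfl fun j _ => ?_
          rw [hentry r i j]
      _ = ∑ i, ∑ r : Fin d → Bool, ∑ j,
            (∏ k, if r k then θ else 1 - θ) *
              (X i j - (1/θ) * ∑ k, (if r k then (1:ℝ) else 0) * (U i k * V j k)) ^ 2 :=
          Finset.sum_comm
      _ = _ := Finset.sum_congr rfl fun i _ => Finset.sum_comm
  rw [step1]
  have step2 : ∀ (i : Fin m) (j : Fin n),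
      ∑ r : Fin d → Bool,
          (∏ k, if r k then θ else 1 - θ) *
            (X i j - (1/θ) * ∑ k, (if r k then (1:ℝ) else 0) * (U i k * V j k)) ^ 2
      = (X i j - ∑ k, U i k * V j k)^2 + ((1-θ)/θ) * ∑ k, (U i k * V j k)^2 :=
    fun i j => dropout_entry_exp hθ (X i j) (fun k => U i k * V j k)
  simp only [step2, Finset.sum_add_distrib]
  refine congrArg₂ (· + ·) ?_ ?_
  · refine Finset.sum_congr rfl fun i _ => Finset.sum_congr rfl fun j _ => ?_
    rw [Matrix.sub_apply, Matrix.mul_apply]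
    simp [Matrix.transpose_apply]
  · simp only [← Finset.mul_sum]
    congr 1
    calc ∑ i : Fin m, ∑ j : Fin n, ∑ k : Fin d, (U i k * V j k)^2
        = ∑ i : Fin m, ∑ k : Fin d, ∑ j : Fin n, (U i k * V j k)^2 :=
          Finset.sum_congr rfl fun i _ => Finset.sum_comm
      _ = ∑ k : Fin d, ∑ i : Fin m, ∑ j : Fin n, (U i k * V j k)^2 := Finset.sum_comm
      _ = ∑ k, (∑ i, (U i k) ^ 2) * (∑ j, (V j k) ^ 2) := by
          refine Finset.sum_congr rfl fun k _ => ?_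
          rw [Finset.sum_mul_sum]
          exact Finset.sum_congr rfl fun i _ => Finset.sum_congr rfl fun j _ => by ring
end

section
/- Let x_1 ≥ x_2 ≥ … ≥ x_r > 0 and λ > 0. Then any global minimizer a ∈ ℝ^r of the function a ↦ ‖a − x‖₂² + λ ‖a‖₁² has all nonnegative coordinates. -/
/-- Any global minimizer of `a ↦ ‖a - x‖₂² + λ ‖a‖₁²`, where `x` has positive
nonincreasing entries and `λ > 0`, has all nonnegative coordinates. -/
theorem minimizer_nonneg {r : ℕ} (x : Fin r → ℝ) (lam : ℝ) (hlam : 0 < lam)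
    (hpos : ∀ i, 0 < x i) (hmono : ∀ i j : Fin r, i ≤ j → x j ≤ x i)
    (a : Fin r → ℝ)
    (hmin : ∀ b : Fin r → ℝ,
      (∑ i, (a i - x i) ^ 2) + lam * (∑ i, |a i|) ^ 2 ≤
        (∑ i, (b i - x i) ^ 2) + lam * (∑ i, |b i|) ^ 2) :
    ∀ i, 0 ≤ a i := by
  intro i
  by_contra hneg
  push_neg at hneg
  set b : Fin r → ℝ := Function.update a i (-a i) with hb
  have habs : ∀ j, |b j| = |a j| := by
    intro j
    by_cases h : j = i
    · subst h; simp [hb]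
    · simp [hb, Function.update_of_ne h]
  have hsumabs : (∑ j, |b j|) = ∑ j, |a j| := by
    exact Finset.sum_congr rfl (fun j _ => habs j)
  have hsq : (∑ j, (b j - x j) ^ 2) < ∑ j, (a j - x j) ^ 2 := by
    have h1 : (∑ j, (b j - x j) ^ 2) =
        (-a i - x i) ^ 2 + ∑ j ∈ Finset.univ.erase i, (a j - x j) ^ 2 := by
      rw [← Finset.add_sum_erase _ _ (Finset.mem_univ i)]
      congr 1
      · simp [hb]
      · exact Finset.sum_congr rfl (fun j hj => by
          rw [hb, Function.update_of_ne (Finset.ne_of_mem_erase hj)])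
    have h2 : (∑ j, (a j - x j) ^ 2) =
        (a i - x i) ^ 2 + ∑ j ∈ Finset.univ.erase i, (a j - x j) ^ 2 := by
      rw [← Finset.add_sum_erase _ _ (Finset.mem_univ i)]
    rw [h1, h2]
    have := hpos i
    nlinarith [mul_pos (neg_pos.mpr hneg) (hpos i)]
  have := hmin b
  rw [hsumabs] at this
  linarith
end

section
/- Let x_1 ≥ x_2 ≥ … ≥ x_r > 0, λ > 0, and let μ_k = (1/k) Σ_{i=1}^k x_i. Let d be the largest integer 1 ≤ d ≤ r such that x_d − (λd/(1+λd)) μ_d > 0. Then the unique minimizer of a ↦ ‖a − x‖₂² + λ‖a‖₁² over ℝ^r is the vector a with a_i = x_i − (λd/(1+λd)) μ_d for i ≤ d and a_i = 0 for i > d. -/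
open Finset

private lemma minimizer_aux (lam t A B Q C S T : ℝ) (hlam : 0 ≤ lam)
    (hsum : 0 ≤ C + 2 * t * (T - S)) (hid : B = A + Q + C) (hlS : lam * S = t) :
    (A + lam * S ^ 2) + Q ≤ B + lam * T ^ 2 := by
  rw [← hlS] at hsum
  nlinarith [mul_nonneg hlam (sq_nonneg (T - S))]

/-- Closed-form for the unique minimizer of `a ↦ ‖a - x‖₂² + λ‖a‖₁²`:
with `μ_k` the average of the first `k` entries of `x` and `d` the largest integer
`1 ≤ d ≤ r` such that `x_d - (λd/(1+λd)) μ_d > 0`, the unique minimizer is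
`a_i = x_i - (λd/(1+λd)) μ_d` for `i ≤ d` and `a_i = 0` for `i > d`. -/
theorem minimizer_closed_form {r : ℕ} (x : Fin r → ℝ) (lam : ℝ) (hlam : 0 < lam)
    (hpos : ∀ i, 0 < x i) (hmono : ∀ i j : Fin r, i ≤ j → x j ≤ x i)
    (μ : ℕ → ℝ)
    (hμ : ∀ k : ℕ, μ k = (∑ i ∈ univ.filter fun i : Fin r => i.1 < k, x i) / k)
    (d : ℕ) (hd1 : 1 ≤ d) (hd2 : d ≤ r)
    (hcond : 0 < x ⟨d - 1, by omega⟩ - lam * d / (1 + lam * d) * μ d)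
    (hmax : ∀ e : ℕ, d < e → (he : e ≤ r) →
      ¬ (0 < x ⟨e - 1, by omega⟩ - lam * e / (1 + lam * e) * μ e))
    (a : Fin r → ℝ)
    (ha : a = fun i : Fin r => if i.1 < d then x i - lam * d / (1 + lam * d) * μ d else 0) :
    (∀ b : Fin r → ℝ,
        (∑ i, (a i - x i) ^ 2) + lam * (∑ i, |a i|) ^ 2 ≤
          (∑ i, (b i - x i) ^ 2) + lam * (∑ i, |b i|) ^ 2) ∧
      ∀ b : Fin r → ℝ,
        (∀ c : Fin r → ℝ,
            (∑ i, (b i - x i) ^ 2) + lam * (∑ i, |b i|) ^ 2 ≤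
              (∑ i, (c i - x i) ^ 2) + lam * (∑ i, |c i|) ^ 2) →
          b = a := by
  obtain ⟨t, ht⟩ : ∃ t : ℝ, t = lam * d / (1 + lam * d) * μ d := ⟨_, rfl⟩
  rw [← ht] at hcond ha
  have hdpos : (0:ℝ) < (d : ℝ) := by exact_mod_cast hd1
  have hden : (0:ℝ) < 1 + lam * d := by nlinarith
  obtain ⟨Sd, hSdd⟩ : ∃ s : Finset (Fin r), s = univ.filter (fun i : Fin r => i.1 < d) :=
    ⟨_, rfl⟩
  have hcard : Sd.card = d := by
    have hset : Sd = (Finset.range d).attachFin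
        (fun m hm => lt_of_lt_of_le (mem_range.mp hm) hd2) := by
      rw [hSdd]
      ext i
      simp [Finset.mem_attachFin]
    rw [hset, Finset.card_attachFin, Finset.card_range]
  have hμd : (d:ℝ) * μ d = ∑ i ∈ Sd, x i := by
    rw [hμ d, ← hSdd]
    field_simp
  have hμnonneg : 0 ≤ μ d := by
    rw [hμ d]
    apply div_nonneg
    · exact Finset.sum_nonneg fun i _ => (hpos i).le
    · positivity
  have htnonneg : 0 ≤ t := by
    rw [ht]
    apply mul_nonneg _ hμnonneg
    apply div_nonneg (by nlinarith) hden.le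
  have ha_lt : ∀ i : Fin r, i.1 < d → a i = x i - t := by
    intro i hi; rw [ha]; simp [hi]
  have ha_ge : ∀ i : Fin r, ¬ i.1 < d → a i = 0 := by
    intro i hi; rw [ha]; simp [hi]
  have ha_pos : ∀ i : Fin r, i.1 < d → 0 < a i := by
    intro i hi
    rw [ha_lt i hi]
    have hle : i ≤ (⟨d - 1, by omega⟩ : Fin r) := by
      simp only [Fin.le_def]; omega
    have hx := hmono i ⟨d - 1, by omega⟩ hle
    linarith [hcond]
  -- lam * (sum of |a i|) = t
  have hS : (∑ i, |a i|) = (d:ℝ) * μ d - (d:ℝ) * t := by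
    rw [← Finset.sum_filter_add_sum_filter_not univ (fun i : Fin r => i.1 < d)]
    have h1 : ∑ i ∈ Sd, |a i| = ∑ i ∈ Sd, (x i - t) := by
      apply Finset.sum_congr rfl
      intro i hi
      have hi' : i.1 < d := by rw [hSdd] at hi; simpa using hi
      rw [abs_of_pos (ha_pos i hi'), ha_lt i hi']
    have h2 : ∑ i ∈ univ.filter (fun i : Fin r => ¬ i.1 < d), |a i| = 0 := by
      apply Finset.sum_eq_zero
      intro i hi
      have hi' : ¬ i.1 < d := by simpa using (Finset.mem_filter.mp hi).2
      rw [ha_ge i hi', abs_zero]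
    rw [show (univ.filter fun i : Fin r => i.1 < d) = Sd from hSdd.symm, h1, h2,
      Finset.sum_sub_distrib, Finset.sum_const, hcard, ← hμd, nsmul_eq_mul]
    ring
  have htden : t * (1 + lam * d) = lam * (d:ℝ) * μ d := by
    rw [ht]; field_simp
  have hlamS : lam * (∑ i, |a i|) = t := by
    rw [hS]; nlinarith [htden]
  -- x i ≤ t for i with d ≤ i
  have hxt : ∀ i : Fin r, d ≤ i.1 → x i ≤ t := by
    intro i hi
    have hdr : d < r := lt_of_le_of_lt hi i.2
    have hxd : x ⟨d, hdr⟩ ≤ t := by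
      have h := hmax (d + 1) (by omega) (by omega)
      rw [not_lt, sub_nonpos] at h
      have hcastidx : (⟨d + 1 - 1, by omega⟩ : Fin r) = ⟨d, hdr⟩ := by
        apply Fin.ext; simp
      rw [hcastidx] at h
      have hden1 : (0:ℝ) < 1 + lam * (d + 1 : ℕ) := by
        push_cast; nlinarith
      have hsum1 : ∑ j ∈ univ.filter (fun j : Fin r => j.1 < d + 1), x j
          = (∑ j ∈ Sd, x j) + x ⟨d, hdr⟩ := by
        have hins : univ.filter (fun j : Fin r => j.1 < d + 1)
            = insert (⟨d, hdr⟩ : Fin r) Sd := by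
          ext j
          simp only [Finset.mem_filter, Finset.mem_univ, true_and, Finset.mem_insert, hSdd,
            Fin.ext_iff]
          omega
        rw [hins, Finset.sum_insert (by rw [hSdd]; simp)]
        ring
      have hμ1 : ((d:ℝ) + 1) * μ (d + 1) = (d:ℝ) * μ d + x ⟨d, hdr⟩ := by
        rw [hμ (d + 1), hsum1, ← hμd]
        push_cast
        field_simp
      -- from h : x_d ≤ lam*(d+1)/(1+lam*(d+1)) * μ (d+1)
      have h2 : x ⟨d, hdr⟩ * (1 + lam * ((d:ℝ) + 1)) ≤ lam * ((d:ℝ) + 1) * μ (d + 1) := by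
        have h' := h
        push_cast at h'
        rw [div_mul_eq_mul_div, le_div_iff₀ (by push_cast at hden1; linarith)] at h'
        linarith [h']
      have h3 : x ⟨d, hdr⟩ * (1 + lam * (d:ℝ)) ≤ lam * (d:ℝ) * μ d := by
        have h4 : lam * (((d:ℝ) + 1) * μ (d + 1)) = lam * ((d:ℝ) * μ d + x ⟨d, hdr⟩) := by
          rw [hμ1]
        nlinarith [h2, h4]
      rw [ht, div_mul_eq_mul_div, le_div_iff₀ hden]
      nlinarith [h3]
    calc x i ≤ x ⟨d, hdr⟩ := hmono ⟨d, hdr⟩ i (by simpa [Fin.le_def] using hi)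
      _ ≤ t := hxd
  -- key inequality
  have key : ∀ b : Fin r → ℝ,
      ((∑ i, (a i - x i) ^ 2) + lam * (∑ i, |a i|) ^ 2) + (∑ i, (b i - a i) ^ 2) ≤
        (∑ i, (b i - x i) ^ 2) + lam * (∑ i, |b i|) ^ 2 := by
    intro b
    have hterm : ∀ i ∈ (univ : Finset (Fin r)),
        0 ≤ 2 * (a i - x i) * (b i - a i) + 2 * t * (|b i| - |a i|) := by
      intro i _
      by_cases hi : i.1 < d
      · rw [abs_of_pos (ha_pos i hi), ha_lt i hi]
        have hb := le_abs_self (b i)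
        nlinarith [mul_nonneg htnonneg (sub_nonneg.mpr hb)]
      · rw [ha_ge i hi, abs_zero]
        have h1 : x i * b i ≤ x i * |b i| :=
          mul_le_mul_of_nonneg_left (le_abs_self _) (hpos i).le
        have h2 : x i * |b i| ≤ t * |b i| :=
          mul_le_mul_of_nonneg_right (hxt i (by omega)) (abs_nonneg _)
        nlinarith
    have hsum := Finset.sum_nonneg hterm
    have hexp : ∑ i, (2 * (a i - x i) * (b i - a i) + 2 * t * (|b i| - |a i|)) =
        (∑ i, 2 * (a i - x i) * (b i - a i)) + 2 * t * ((∑ i, |b i|) - (∑ i, |a i|)) := by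
      rw [Finset.sum_add_distrib, ← Finset.mul_sum, Finset.sum_sub_distrib]
    rw [hexp] at hsum
    have hid : ∑ i, (b i - x i) ^ 2 =
        (∑ i, (a i - x i) ^ 2) + (∑ i, (b i - a i) ^ 2)
          + ∑ i, 2 * (a i - x i) * (b i - a i) := by
      rw [← Finset.sum_add_distrib, ← Finset.sum_add_distrib]
      exact Finset.sum_congr rfl fun i _ => by ring
    exact minimizer_aux lam t _ _ _ _ _ _ hlam.le hsum hid hlamS
  constructor
  · intro b
    have h := key b
    have hQ : 0 ≤ ∑ i, (b i - a i) ^ 2 := Finset.sum_nonneg fun i _ => sq_nonneg _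
    linarith only [h, hQ]
  · intro b hb
    have h1 := hb a
    have h2 := key b
    have hQ : ∑ i, (b i - a i) ^ 2 ≤ 0 := by linarith only [h1, h2]
    funext i
    have hle : (b i - a i) ^ 2 ≤ ∑ j, (b j - a j) ^ 2 :=
      Finset.single_le_sum (fun j _ => sq_nonneg (b j - a j)) (Finset.mem_univ i)
    have hz : (b i - a i) ^ 2 = 0 := le_antisymm (by linarith only [hle, hQ]) (sq_nonneg _)
    have := sq_eq_zero_iff.mp hz
    linarith only [sub_eq_zero.mp this]
end

section
/- Let x_1 ≥ … ≥ x_r > 0, λ > 0, μ_k = (1/k)Σ_{i=1}^k x_i, and suppose d < r is the largest integer such that x_i − (λd/(1+λd))μ_d > 0 for all i ≤ d. Then x_{d+1} − (λd/(1+λd)) μ_d ≤ 0. -/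
open Finset

/-- If `d < r` is the largest integer such that `x_i - (λd/(1+λd))μ_d > 0` for all
`i ≤ d` (so that, by maximality, `x_{d+1} - (λ(d+1)/(1+λ(d+1)))μ_{d+1} ≤ 0`), then
`x_{d+1} - (λd/(1+λd)) μ_d ≤ 0`. -/
theorem next_entry_below_threshold {r : ℕ} (x : Fin r → ℝ) (lam : ℝ) (hlam : 0 < lam)
    (hpos : ∀ i, 0 < x i) (hmono : ∀ i j : Fin r, i ≤ j → x j ≤ x i)
    (μ : ℕ → ℝ)
    (hμ : ∀ k : ℕ, μ k = (∑ i ∈ univ.filter fun i : Fin r => i.1 < k, x i) / k)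
    (d : ℕ) (hd1 : 1 ≤ d) (hdr : d < r)
    (hmax : x ⟨d, hdr⟩ - lam * (d + 1) / (1 + lam * (d + 1)) * μ (d + 1) ≤ 0) :
    x ⟨d, hdr⟩ - lam * d / (1 + lam * d) * μ d ≤ 0 := by
  set a := x ⟨d, hdr⟩ with ha
  set S := ∑ i ∈ univ.filter fun i : Fin r => i.1 < d, x i with hS
  have hsplit : (∑ i ∈ univ.filter fun i : Fin r => i.1 < d + 1, x i) = S + a := by
    have heq : (univ.filter fun i : Fin r => i.1 < d + 1) =
        insert ⟨d, hdr⟩ (univ.filter fun i : Fin r => i.1 < d) := by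
      ext i
      simp [Fin.ext_iff, Nat.lt_succ_iff_lt_or_eq, or_comm]
      omega
    rw [heq, sum_insert (by simp)]
    rw [hS, ha]; ring
  have hdpos : (0 : ℝ) < d := by exact_mod_cast Nat.lt_of_lt_of_le Nat.zero_lt_one hd1
  have h1 : (0 : ℝ) < 1 + lam * d := by positivity
  have h2 : (0 : ℝ) < 1 + lam * (d + 1) := by positivity
  have h3 : (0 : ℝ) < (d : ℝ) + 1 := by positivity
  rw [hμ] at hmax ⊢
  rw [hsplit] at hmax
  rw [← hS]
  push_cast at hmax
  rw [sub_nonpos] at hmax ⊢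
  rw [div_mul_div_comm, le_div_iff₀ (by positivity)] at hmax
  rw [div_mul_div_comm, le_div_iff₀ (by positivity)]
  nlinarith [hmax, hdpos]
end

section
/- Let λ > 0 and suppose a ∈ ℝ^r minimizes a ↦ ‖a − x‖₂² + λ‖a‖₁² where all x_i > 0. If exactly the first k coordinates of a are nonzero (and positive), then ‖a‖₁ = (k/(1+λk)) μ_k, where μ_k is the average of x_1,…,x_k, and a_i = x_i − (λk/(1+λk)) μ_k for i = 1,…,k. -/
open Finset

/-- If `a` minimizes `a ↦ ‖a - x‖₂² + λ‖a‖₁²` (`x` with positive entries, `λ > 0`)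
and exactly the first `k` coordinates of `a` are nonzero (and positive), then
`‖a‖₁ = (k/(1+λk)) μ_k` and `a_i = x_i - (λk/(1+λk)) μ_k` for `i = 1,…,k`,
where `μ_k` is the average of `x_1,…,x_k`. -/
theorem minimizer_support_values {r : ℕ} (x : Fin r → ℝ) (lam : ℝ) (hlam : 0 < lam)
    (hpos : ∀ i, 0 < x i)
    (a : Fin r → ℝ)
    (hmin : ∀ b : Fin r → ℝ,
      (∑ i, (a i - x i) ^ 2) + lam * (∑ i, |a i|) ^ 2 ≤
        (∑ i, (b i - x i) ^ 2) + lam * (∑ i, |b i|) ^ 2)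
    (k : ℕ) (hk1 : 1 ≤ k) (hkr : k ≤ r)
    (hsupp : ∀ i : Fin r, a i ≠ 0 ↔ i.1 < k)
    (hsign : ∀ i : Fin r, i.1 < k → 0 < a i)
    (μ : ℕ → ℝ)
    (hμ : ∀ j : ℕ, μ j = (∑ i ∈ univ.filter fun i : Fin r => i.1 < j, x i) / j) :
    (∑ i, |a i|) = (k : ℝ) / (1 + lam * k) * μ k ∧
      ∀ i : Fin r, i.1 < k → a i = x i - lam * k / (1 + lam * k) * μ k := by
  set S : ℝ := ∑ i, |a i| with hS
  -- first-order condition on each support coordinate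
  have key : ∀ i : Fin r, i.1 < k → a i = x i - lam * S := by
    intro i hi
    have hai : 0 < a i := hsign i hi
    set B : ℝ := a i - x i + lam * S with hB
    have hineq : ∀ t : ℝ, -a i ≤ t → 0 ≤ t * (2 * B + t * (1 + lam)) := by
      intro t ht
      have h := hmin (fun j => if j = i then a i + t else a j)
      have split : ∀ g : Fin r → ℝ, ∑ j, g j = g i + ∑ j ∈ univ.erase i, g j :=
        fun g => (Finset.add_sum_erase univ g (mem_univ i)).symm
      have e0 : ∀ j ∈ univ.erase i, (if j = i then a i + t else a j) = a j := by
        intro j hj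
        simp [Finset.mem_erase] at hj
        simp [hj]
      have e1 : ∑ j, ((if j = i then a i + t else a j) - x j) ^ 2
          = (a i + t - x i) ^ 2 + ∑ j ∈ univ.erase i, (a j - x j) ^ 2 := by
        rw [split (fun j => ((if j = i then a i + t else a j) - x j) ^ 2)]
        simp only [if_pos rfl]
        congr 1
        exact Finset.sum_congr rfl (fun j hj => by rw [e0 j hj])
      have e2 : ∑ j, |if j = i then a i + t else a j|
          = (a i + t) + ∑ j ∈ univ.erase i, |a j| := by
        rw [split (fun j => |if j = i then a i + t else a j|)]
        have hif : (if i = i then a i + t else a i) = a i + t := if_pos rfl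
        rw [hif, abs_of_nonneg (by linarith : (0:ℝ) ≤ a i + t)]
        congr 1
        exact Finset.sum_congr rfl (fun j hj => by rw [e0 j hj])
      have e3 : S = a i + ∑ j ∈ univ.erase i, |a j| := by
        rw [hS, split (fun j => |a j|), abs_of_pos hai]
      have e4 : ∑ j, (a j - x j) ^ 2
          = (a i - x i) ^ 2 + ∑ j ∈ univ.erase i, (a j - x j) ^ 2 :=
        split _
      have e5 : ∑ j, |if j = i then a i + t else a j| = S + t := by
        rw [e2, e3]; ring
      rw [e1, e5, e4] at h
      nlinarith [h]
    by_contra hne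
    have hBne : B ≠ 0 := by
      intro h0
      apply hne
      have : a i - x i + lam * S = 0 := h0
      linarith
    have hBabs : 0 < |B| := abs_pos.mpr hBne
    set ε : ℝ := min (a i / (2 * |B|)) (1 / (2 * (1 + lam))) with hε
    have hεpos : 0 < ε := lt_min (by positivity) (by positivity)
    have hε1 : ε * |B| ≤ a i / 2 := by
      have := min_le_left (a i / (2 * |B|)) (1 / (2 * (1 + lam)))
      calc ε * |B| ≤ a i / (2 * |B|) * |B| := by nlinarith
        _ = a i / 2 := by field_simp
    have hε2 : ε * (1 + lam) ≤ 1 / 2 := by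
      have := min_le_right (a i / (2 * |B|)) (1 / (2 * (1 + lam)))
      calc ε * (1 + lam) ≤ 1 / (2 * (1 + lam)) * (1 + lam) := by nlinarith
        _ = 1 / 2 := by field_simp
    have ht : -a i ≤ -ε * B := by
      have : ε * B ≤ ε * |B| := by nlinarith [le_abs_self B]
      linarith
    have h := hineq (-ε * B) ht
    have hBB : 0 < B ^ 2 := by positivity
    nlinarith [sq_abs B, mul_pos hεpos hBB,
      mul_le_mul_of_nonneg_left hε2 (le_of_lt (mul_pos hεpos hBB))]
  -- sum over the support
  have hcard : (univ.filter fun i : Fin r => i.1 < k).card = k := by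
    have : (univ.filter fun i : Fin r => i.1 < k)
        = Finset.map (Fin.castLEEmb hkr) univ := by
      ext i
      simp only [Finset.mem_filter, Finset.mem_univ, true_and, Finset.mem_map,
        Fin.castLEEmb_apply]
      constructor
      · intro h
        exact ⟨⟨i.1, h⟩, by ext; simp⟩
      · rintro ⟨j, rfl⟩
        simpa using j.2
    rw [this]
    simp
  have hSsum : S = ∑ j ∈ univ.filter (fun i : Fin r => i.1 < k), a j := by
    rw [hS, ← Finset.sum_filter_add_sum_filter_not univ (fun i : Fin r => i.1 < k)
      (fun j => |a j|)]
    have h1 : ∑ j ∈ univ.filter (fun i : Fin r => i.1 < k), |a j|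
        = ∑ j ∈ univ.filter (fun i : Fin r => i.1 < k), a j := by
      apply Finset.sum_congr rfl
      intro j hj
      simp only [Finset.mem_filter] at hj
      exact abs_of_pos (hsign j hj.2)
    have h2 : ∑ j ∈ univ.filter (fun i : Fin r => ¬ i.1 < k), |a j| = 0 := by
      apply Finset.sum_eq_zero
      intro j hj
      simp only [Finset.mem_filter] at hj
      have : a j = 0 := by
        by_contra h
        exact hj.2 ((hsupp j).mp h)
      simp [this]
    rw [h1, h2, add_zero]
  have hxsum : ∑ i ∈ univ.filter (fun i : Fin r => i.1 < k), x i = k * μ k := by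
    rw [hμ k]
    field_simp
  have hsum : S = k * μ k - (k : ℝ) * (lam * S) :=
    calc S = ∑ j ∈ univ.filter (fun i : Fin r => i.1 < k), a j := hSsum
      _ = ∑ j ∈ univ.filter (fun i : Fin r => i.1 < k), (x j - lam * S) := by
          apply Finset.sum_congr rfl
          intro j hj
          simp only [Finset.mem_filter] at hj
          exact key j hj.2
      _ = (∑ j ∈ univ.filter (fun i : Fin r => i.1 < k), x j) - (k : ℝ) * (lam * S) := by
          rw [Finset.sum_sub_distrib, Finset.sum_const, hcard, nsmul_eq_mul]
      _ = k * μ k - (k : ℝ) * (lam * S) := by rw [hxsum]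
  have hden : (0:ℝ) < 1 + lam * k := by
    have : (0:ℝ) ≤ lam * k := by positivity
    linarith
  have hSval : S = (k : ℝ) / (1 + lam * k) * μ k := by
    rw [div_mul_eq_mul_div, eq_div_iff hden.ne']
    linear_combination hsum
  refine ⟨hSval, fun i hi => ?_⟩
  rw [key i hi, hSval]
  ring
end

section
/- For a positive real θ̄ < 1, the Fenchel conjugate of the function Θ(X) = (1/2)‖X‖_△², where ‖X‖_△² = inf over d ≥ rank(X) and factorizations UVᵀ = X of (d(1−θ̄)/θ̄) Σ_{k=1}^d ‖u_k‖₂²‖v_k‖₂², is Θ*(Q) = (θ̄/(1−θ̄)) · σ_max(Q)²/2, where σ_max(Q) is the largest singular value of Q. -/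
open Matrix

/-- `‖X‖_△²`: the infimum over `d ≥ rank X` and factorizations `U Vᵀ = X` of
`(d(1-θ̄)/θ̄) Σ_k ‖u_k‖² ‖v_k‖²`. -/
noncomputable def triNormSq (θb : ℝ) {m n : ℕ} (X : Matrix (Fin m) (Fin n) ℝ) : ℝ :=
  sInf {t : ℝ | ∃ (d : ℕ) (U : Matrix (Fin m) (Fin d) ℝ) (V : Matrix (Fin n) (Fin d) ℝ),
    X.rank ≤ d ∧ U * Vᵀ = X ∧
    t = ((d : ℝ) * (1 - θb) / θb) * ∑ k, (∑ i, (U i k) ^ 2) * (∑ j, (V j k) ^ 2)}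

/-- The spectral norm (largest singular value) of `Q`, characterized as
`σ_max(Q) = sup { uᵀ Q v : ‖u‖₂ ≤ 1, ‖v‖₂ ≤ 1 }`. -/
noncomputable def sigmaMax {m n : ℕ} (Q : Matrix (Fin m) (Fin n) ℝ) : ℝ :=
  sSup {t : ℝ | ∃ (u : Fin m → ℝ) (v : Fin n → ℝ),
    (∑ i, (u i) ^ 2) ≤ 1 ∧ (∑ j, (v j) ^ 2) ≤ 1 ∧ t = ∑ i, ∑ j, u i * Q i j * v j}

/-- The Fenchel conjugate of a function on `m × n` matrices with respect to the
Frobenius (trace) inner product. -/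
noncomputable def fenchel {m n : ℕ} (f : Matrix (Fin m) (Fin n) ℝ → ℝ)
    (Q : Matrix (Fin m) (Fin n) ℝ) : ℝ :=
  sSup {t : ℝ | ∃ X : Matrix (Fin m) (Fin n) ℝ,
    t = (∑ i, ∑ j, Q i j * X i j) - f X}

section aux

variable {m n : ℕ} (Q : Matrix (Fin m) (Fin n) ℝ)

def sigmaSet : Set ℝ := {t : ℝ | ∃ (u : Fin m → ℝ) (v : Fin n → ℝ),
    (∑ i, (u i) ^ 2) ≤ 1 ∧ (∑ j, (v j) ^ 2) ≤ 1 ∧ t = ∑ i, ∑ j, u i * Q i j * v j}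

lemma sigmaSet_nonempty : (sigmaSet Q).Nonempty :=
  ⟨0, 0, 0, by simp, by simp, by simp⟩

lemma sigmaSet_bddAbove : BddAbove (sigmaSet Q) := by
  refine ⟨∑ i, ∑ j, |Q i j|, ?_⟩
  rintro t ⟨u, v, hu, hv, rfl⟩
  refine Finset.sum_le_sum fun i _ => Finset.sum_le_sum fun j _ => ?_
  have hui : |u i| ≤ 1 := by
    rw [← sq_le_one_iff_abs_le_one]
    exact le_trans (Finset.single_le_sum (fun k _ => sq_nonneg (u k)) (Finset.mem_univ i)) hu
  have hvj : |v j| ≤ 1 := by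
    rw [← sq_le_one_iff_abs_le_one]
    exact le_trans (Finset.single_le_sum (fun k _ => sq_nonneg (v k)) (Finset.mem_univ j)) hv
  calc u i * Q i j * v j ≤ |u i * Q i j * v j| := le_abs_self _
    _ = |u i| * |Q i j| * |v j| := by rw [abs_mul, abs_mul]
    _ ≤ 1 * |Q i j| * 1 := by
          apply mul_le_mul (mul_le_mul hui le_rfl (abs_nonneg _) zero_le_one) hvj (abs_nonneg _)
          positivity
    _ = |Q i j| := by ring

lemma sigmaMax_nonneg : 0 ≤ sigmaMax Q :=
  le_csSup (sigmaSet_bddAbove Q) ⟨0, 0, by simp, by simp, by simp⟩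

/-- Per-pair bound. -/
lemma pair_le (u : Fin m → ℝ) (v : Fin n → ℝ) :
    (∑ i, ∑ j, u i * Q i j * v j) ≤
      sigmaMax Q * Real.sqrt ((∑ i, (u i) ^ 2) * (∑ j, (v j) ^ 2)) := by
  set p := ∑ i, (u i) ^ 2 with hp
  set q := ∑ j, (v j) ^ 2 with hq
  have hp0 : 0 ≤ p := Finset.sum_nonneg fun i _ => sq_nonneg _
  have hq0 : 0 ≤ q := Finset.sum_nonneg fun j _ => sq_nonneg _
  rcases eq_or_lt_of_le hp0 with hpz | hppos
  · have hu0 : ∀ i, u i = 0 := by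
      intro i
      have := (Finset.sum_eq_zero_iff_of_nonneg (fun k _ => sq_nonneg (u k))).1 hpz.symm i
        (Finset.mem_univ i)
      exact pow_eq_zero_iff two_ne_zero |>.1 this
    have : (∑ i, ∑ j, u i * Q i j * v j) = 0 := by
      apply Finset.sum_eq_zero; intro i _; simp [hu0 i]
    rw [this]
    exact mul_nonneg (sigmaMax_nonneg Q) (Real.sqrt_nonneg _)
  rcases eq_or_lt_of_le hq0 with hqz | hqpos
  · have hv0 : ∀ j, v j = 0 := by
      intro j
      have := (Finset.sum_eq_zero_iff_of_nonneg (fun k _ => sq_nonneg (v k))).1 hqz.symm j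
        (Finset.mem_univ j)
      exact pow_eq_zero_iff two_ne_zero |>.1 this
    have : (∑ i, ∑ j, u i * Q i j * v j) = 0 := by
      apply Finset.sum_eq_zero; intro i _
      apply Finset.sum_eq_zero; intro j _; simp [hv0 j]
    rw [this]
    exact mul_nonneg (sigmaMax_nonneg Q) (Real.sqrt_nonneg _)
  · set a := Real.sqrt p with ha
    set b := Real.sqrt q with hb
    have hap : 0 < a := Real.sqrt_pos.2 hppos
    have hbp : 0 < b := Real.sqrt_pos.2 hqpos
    have ha2 : a ^ 2 = p := Real.sq_sqrt hp0
    have hb2 : b ^ 2 = q := Real.sq_sqrt hq0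
    have hmem : (∑ i, ∑ j, (u i / a) * Q i j * (v j / b)) ∈ sigmaSet Q := by
      refine ⟨fun i => u i / a, fun j => v j / b, ?_, ?_, rfl⟩
      · have : ∑ i, (u i / a) ^ 2 = p / a ^ 2 := by
          simp_rw [div_pow]
          rw [← Finset.sum_div, hp]
        rw [this, ha2, div_self hppos.ne']
      · have : ∑ j, (v j / b) ^ 2 = q / b ^ 2 := by
          simp_rw [div_pow]
          rw [← Finset.sum_div, hq]
        rw [this, hb2, div_self hqpos.ne']
    have hle : (∑ i, ∑ j, (u i / a) * Q i j * (v j / b)) ≤ sigmaMax Q :=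
      le_csSup (sigmaSet_bddAbove Q) hmem
    have hexp : (∑ i, ∑ j, u i * Q i j * v j)
        = a * b * ∑ i, ∑ j, (u i / a) * Q i j * (v j / b) := by
      rw [Finset.mul_sum]
      refine Finset.sum_congr rfl fun i _ => ?_
      rw [Finset.mul_sum]
      refine Finset.sum_congr rfl fun j _ => ?_
      field_simp
    rw [hexp, Real.sqrt_mul hp0, ← ha, ← hb]
    calc a * b * ∑ i, ∑ j, (u i / a) * Q i j * (v j / b)
        ≤ a * b * sigmaMax Q := by
          exact mul_le_mul_of_nonneg_left hle (by positivity)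
      _ = sigmaMax Q * (a * b) := by ring

end aux


section tri

variable (θb : ℝ) {m n : ℕ}

lemma triSet_nonempty (X : Matrix (Fin m) (Fin n) ℝ) :
    {t : ℝ | ∃ (d : ℕ) (U : Matrix (Fin m) (Fin d) ℝ) (V : Matrix (Fin n) (Fin d) ℝ),
      X.rank ≤ d ∧ U * Vᵀ = X ∧
      t = ((d : ℝ) * (1 - θb) / θb) * ∑ k, (∑ i, (U i k) ^ 2) * (∑ j, (V j k) ^ 2)}.Nonempty := by
  refine ⟨_, n, X, 1, Matrix.rank_le_width X, ?_, rfl⟩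
  rw [Matrix.transpose_one, Matrix.mul_one]

lemma triSet_bddBelow (h0 : 0 < θb) (h1 : θb < 1) (X : Matrix (Fin m) (Fin n) ℝ) :
    BddBelow {t : ℝ | ∃ (d : ℕ) (U : Matrix (Fin m) (Fin d) ℝ) (V : Matrix (Fin n) (Fin d) ℝ),
      X.rank ≤ d ∧ U * Vᵀ = X ∧
      t = ((d : ℝ) * (1 - θb) / θb) * ∑ k, (∑ i, (U i k) ^ 2) * (∑ j, (V j k) ^ 2)} := by
  refine ⟨0, ?_⟩
  rintro t ⟨d, U, V, -, -, rfl⟩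
  apply mul_nonneg
  · exact div_nonneg (mul_nonneg (Nat.cast_nonneg d) (by linarith)) h0.le
  · exact Finset.sum_nonneg fun k _ => mul_nonneg (by positivity) (by positivity)

lemma tri_le (h0 : 0 < θb) (h1 : θb < 1) (X : Matrix (Fin m) (Fin n) ℝ) {d : ℕ}
    (U : Matrix (Fin m) (Fin d) ℝ) (V : Matrix (Fin n) (Fin d) ℝ)
    (hd : X.rank ≤ d) (hUV : U * Vᵀ = X) :
    triNormSq θb X ≤ ((d : ℝ) * (1 - θb) / θb) * ∑ k, (∑ i, (U i k) ^ 2) * (∑ j, (V j k) ^ 2) :=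
  csInf_le (triSet_bddBelow θb h0 h1 X) ⟨d, U, V, hd, hUV, rfl⟩

lemma tri_lb (X : Matrix (Fin m) (Fin n) ℝ) (r : ℝ)
    (hr : ∀ (d : ℕ) (U : Matrix (Fin m) (Fin d) ℝ) (V : Matrix (Fin n) (Fin d) ℝ),
      X.rank ≤ d → U * Vᵀ = X →
      r ≤ ((d : ℝ) * (1 - θb) / θb) * ∑ k, (∑ i, (U i k) ^ 2) * (∑ j, (V j k) ^ 2)) :
    r ≤ triNormSq θb X := by
  refine le_csInf (triSet_nonempty θb X) ?_
  rintro t ⟨d, U, V, hd, hUV, rfl⟩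
  exact hr d U V hd hUV

end tri

lemma fenchel_upper (θb : ℝ) (h0 : 0 < θb) (h1 : θb < 1) {m n : ℕ}
    (Q : Matrix (Fin m) (Fin n) ℝ) (X : Matrix (Fin m) (Fin n) ℝ) :
    (∑ i, ∑ j, Q i j * X i j) - (1 / 2) * triNormSq θb X ≤
      (θb / (1 - θb)) * (sigmaMax Q) ^ 2 / 2 := by
  set σ := sigmaMax Q with hσdef
  set c := (1 - θb) / θb with hcdef
  have hc : 0 < c := div_pos (by linarith) h0
  have hσ0 : 0 ≤ σ := sigmaMax_nonneg Q
  have h1θ : (1 : ℝ) - θb ≠ 0 := by linarith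
  have htar : 2 * c * ((θb / (1 - θb)) * σ ^ 2 / 2) = σ ^ 2 := by
    rw [hcdef]; field_simp
  have key : ∀ (d : ℕ) (U : Matrix (Fin m) (Fin d) ℝ) (V : Matrix (Fin n) (Fin d) ℝ),
      X.rank ≤ d → U * Vᵀ = X →
      2 * ((∑ i, ∑ j, Q i j * X i j) - (θb / (1 - θb)) * σ ^ 2 / 2) ≤
        ((d : ℝ) * (1 - θb) / θb) * ∑ k, (∑ i, (U i k) ^ 2) * (∑ j, (V j k) ^ 2) := by
    intro d U V hd hUV
    subst hUV
    have hexpand : (∑ i, ∑ j, Q i j * (U * Vᵀ) i j)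
        = ∑ k, ∑ i, ∑ j, U i k * Q i j * V j k := by
      calc (∑ i, ∑ j, Q i j * (U * Vᵀ) i j)
          = ∑ i, ∑ k, ∑ j, U i k * Q i j * V j k := by
            refine Finset.sum_congr rfl fun i _ => ?_
            simp only [Matrix.mul_apply, Matrix.transpose_apply, Finset.mul_sum]
            rw [Finset.sum_comm]
            exact Finset.sum_congr rfl fun k _ => Finset.sum_congr rfl fun j _ => by ring
        _ = ∑ k, ∑ i, ∑ j, U i k * Q i j * V j k := Finset.sum_comm
    set p : Fin d → ℝ := fun k => ∑ i, (U i k) ^ 2 with hpdef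
    set q : Fin d → ℝ := fun k => ∑ j, (V j k) ^ 2 with hqdef
    set r : Fin d → ℝ := fun k => Real.sqrt (p k * q k) with hrdef
    have hp0 : ∀ k, 0 ≤ p k := fun k => Finset.sum_nonneg fun i _ => sq_nonneg _
    have hq0 : ∀ k, 0 ≤ q k := fun k => Finset.sum_nonneg fun j _ => sq_nonneg _
    have hT : (∑ i, ∑ j, Q i j * (U * Vᵀ) i j) ≤ σ * ∑ k, r k := by
      rw [hexpand, Finset.mul_sum]
      refine Finset.sum_le_sum fun k _ => ?_
      exact pair_le Q (fun i => U i k) (fun j => V j k)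
    have hR2 : (∑ k, r k) ^ 2 ≤ (d : ℝ) * ∑ k, p k * q k := by
      have := Finset.sum_sq_le_sum_mul_sum_of_sq_eq_mul Finset.univ
        (r := r) (f := fun _ : Fin d => (1 : ℝ)) (g := fun k => p k * q k)
        (fun _ _ => zero_le_one) (fun k _ => mul_nonneg (hp0 k) (hq0 k))
        (fun k _ => by rw [hrdef]; simp [Real.sq_sqrt (mul_nonneg (hp0 k) (hq0 k))])
      simpa using this
    have hR0 : 0 ≤ ∑ k, r k := Finset.sum_nonneg fun k _ => Real.sqrt_nonneg _
    have hS2 : 0 ≤ ∑ k, p k * q k :=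
      Finset.sum_nonneg fun k _ => mul_nonneg (hp0 k) (hq0 k)
    have hdc : ((d : ℝ) * (1 - θb) / θb) = (d : ℝ) * c := by rw [hcdef, mul_div_assoc]
    rw [hdc]
    nlinarith [mul_le_mul_of_nonneg_left hT hc.le, sq_nonneg (σ - c * ∑ k, r k),
      mul_le_mul_of_nonneg_left hR2 (mul_pos hc hc).le, htar, hS2, hR0, hc.le,
      Nat.cast_nonneg (α := ℝ) d]
  have := tri_lb θb X (2 * ((∑ i, ∑ j, Q i j * X i j) - (θb / (1 - θb)) * σ ^ 2 / 2)) key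
  linarith

/-- The Fenchel conjugate of `Θ(X) = (1/2)‖X‖_△²` is
`Θ*(Q) = (θ̄/(1-θ̄)) σ_max(Q)² / 2`. -/
theorem fenchel_triNormSq (θb : ℝ) (h0 : 0 < θb) (h1 : θb < 1) {m n : ℕ}
    (Q : Matrix (Fin m) (Fin n) ℝ) :
    fenchel (fun X => (1 / 2) * triNormSq θb X) Q =
      (θb / (1 - θb)) * (sigmaMax Q) ^ 2 / 2 := by
  set σ := sigmaMax Q with hσdef
  set c := (1 - θb) / θb with hcdef
  have hc : 0 < c := div_pos (by linarith) h0
  have hσ0 : 0 ≤ σ := sigmaMax_nonneg Q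
  have h1θ : (1 : ℝ) - θb ≠ 0 := by linarith
  have hbddF : BddAbove {t : ℝ | ∃ X : Matrix (Fin m) (Fin n) ℝ,
      t = (∑ i, ∑ j, Q i j * X i j) - (1 / 2) * triNormSq θb X} := by
    refine ⟨(θb / (1 - θb)) * σ ^ 2 / 2, ?_⟩
    rintro t ⟨X, rfl⟩
    exact fenchel_upper θb h0 h1 Q X
  apply le_antisymm
  · refine csSup_le ⟨_, ⟨0, rfl⟩⟩ ?_
    rintro t ⟨X, rfl⟩
    exact fenchel_upper θb h0 h1 Q X
  · apply le_of_forall_sub_le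
    intro δ hδ
    set t : ℝ := σ / c with htdef
    have ht0 : 0 ≤ t := div_nonneg hσ0 hc.le
    have hct : c * t = σ := by rw [htdef, mul_div_cancel₀ _ hc.ne']
    have h1t : (0 : ℝ) < t + 1 := by linarith
    set ε : ℝ := δ / (t + 1) with hεdef
    have hε : 0 < ε := div_pos hδ h1t
    have htε : t * ε ≤ δ := by
      rw [hεdef, mul_div_assoc'] at *
      rw [div_le_iff₀ h1t]
      nlinarith
    obtain ⟨s, hsmem, hsgt⟩ := exists_lt_of_lt_csSup (sigmaSet_nonempty Q)
      (show σ - ε < sSup (sigmaSet Q) by rw [show sSup (sigmaSet Q) = σ from rfl]; linarith)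
    obtain ⟨u, v, hu, hv, rfl⟩ := hsmem
    set X : Matrix (Fin m) (Fin n) ℝ := Matrix.of fun i j => t * (u i * v j) with hXdef
    set U' : Matrix (Fin m) (Fin 1) ℝ := Matrix.of fun i _ => t * u i with hU'def
    set V' : Matrix (Fin n) (Fin 1) ℝ := Matrix.of fun j _ => v j with hV'def
    have hfac : U' * V'ᵀ = X := by
      ext i j
      simp [hU'def, hV'def, hXdef, Matrix.mul_apply]
      ring
    have hrank : X.rank ≤ 1 := by
      rw [← hfac]
      exact le_trans (Matrix.rank_mul_le_left U' V'ᵀ) (Matrix.rank_le_width U')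
    have htri : triNormSq θb X ≤ c * t ^ 2 := by
      refine le_trans (tri_le θb h0 h1 X U' V' (by simpa using hrank) hfac) ?_
      have hsum : ∑ k : Fin 1, (∑ i, (U' i k) ^ 2) * (∑ j, (V' j k) ^ 2)
          = (t ^ 2 * ∑ i, (u i) ^ 2) * (∑ j, (v j) ^ 2) := by
        rw [Fin.sum_univ_one]
        congr 1
        simp only [hU'def, Matrix.of_apply, mul_pow]
        rw [← Finset.mul_sum]
      rw [hsum]
      have hp0 : 0 ≤ ∑ i, (u i) ^ 2 := Finset.sum_nonneg fun i _ => sq_nonneg _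
      have hq0 : 0 ≤ ∑ j, (v j) ^ 2 := Finset.sum_nonneg fun j _ => sq_nonneg _
      have hPQ : (∑ i, (u i) ^ 2) * (∑ j, (v j) ^ 2) ≤ 1 := mul_le_one₀ hu hq0 hv
      have hmono := mul_le_mul_of_nonneg_left hPQ (mul_nonneg hc.le (sq_nonneg t))
      have hcoef : ((1 : ℕ) : ℝ) * (1 - θb) / θb = c := by rw [hcdef]; push_cast; ring
      rw [hcoef]
      nlinarith [hmono]
    have hQX : (∑ i, ∑ j, Q i j * X i j) = t * ∑ i, ∑ j, u i * Q i j * v j := by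
      rw [Finset.mul_sum]
      refine Finset.sum_congr rfl fun i _ => ?_
      rw [Finset.mul_sum]
      exact Finset.sum_congr rfl fun j _ => by simp [hXdef]; ring
    have hval : (∑ i, ∑ j, Q i j * X i j) - (1 / 2) * triNormSq θb X ≤
        fenchel (fun X => (1 / 2) * triNormSq θb X) Q :=
      le_csSup hbddF ⟨X, rfl⟩
    have hts : t * (σ - ε) ≤ t * ∑ i, ∑ j, u i * Q i j * v j :=
      mul_le_mul_of_nonneg_left hsgt.le ht0
    have hexp : t * (σ - ε) = t * σ - t * ε := by ring
    have htσ : t * σ = c * t ^ 2 := by rw [← hct]; ring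
    have hT0 : (θb / (1 - θb)) * σ ^ 2 / 2 = c * t ^ 2 / 2 := by
      rw [← hct, hcdef]
      field_simp
    rw [hT0]
    linarith
end

section
/- The convex envelope (biconjugate) of the function X ↦ (1/2)‖X‖_△², with ‖X‖_△ defined via the adaptive-dropout variational formula with parameter 0 < θ̄ < 1, equals X ↦ ((1−θ̄)/(2θ̄)) ‖X‖_⋆², where ‖X‖_⋆ is the nuclear norm (sum of singular values) of X. -/
open Matrix

/-- The nuclear norm of a real matrix: the sum of its singular values, i.e. the sum
of the square roots of the eigenvalues of `Xᵀ X`. -/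
noncomputable def nuclearNorm {m n : ℕ} (X : Matrix (Fin m) (Fin n) ℝ) : ℝ :=
  ∑ j, Real.sqrt ((Matrix.isHermitian_conjTranspose_mul_self X).eigenvalues j)

namespace TriAux

open Finset

variable {m n : ℕ}

/-- Frobenius inner product. -/
def ip (Q Y : Matrix (Fin m) (Fin n) ℝ) : ℝ := ∑ i, ∑ j, Q i j * Y i j

section SVD

variable (X : Matrix (Fin m) (Fin n) ℝ)

noncomputable def mu (j : Fin n) : ℝ := (isHermitian_conjTranspose_mul_self X).eigenvalues j

noncomputable def sv (j : Fin n) : ℝ := Real.sqrt (mu X j)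

noncomputable def rv (j : Fin n) : Fin n → ℝ :=
  ((isHermitian_conjTranspose_mul_self X).eigenvectorBasis j : EuclideanSpace ℝ (Fin n))

lemma mu_nonneg (j : Fin n) : 0 ≤ mu X j := by
  have h := Matrix.posSemidef_conjTranspose_mul_self X
  rw [Matrix.conjTranspose_eq_transpose_of_trivial] at h
  exact h.eigenvalues_nonneg j

lemma sv_nonneg (j : Fin n) : 0 ≤ sv X j := Real.sqrt_nonneg _

lemma sv_sq (j : Fin n) : sv X j ^ 2 = mu X j := Real.sq_sqrt (mu_nonneg X j)

lemma rv_dot (j k : Fin n) : rv X j ⬝ᵥ rv X k = if j = k then 1 else 0 := by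
  have h := (isHermitian_conjTranspose_mul_self X).eigenvectorBasis.orthonormal
  have h2 := orthonormal_iff_ite.mp h j k
  rw [← h2]
  simp [rv, dotProduct, PiLp.inner_apply, RCLike.inner_apply, mul_comm]

lemma rv_complete (a b : Fin n) :
    ∑ j, rv X j a * rv X j b = if a = b then 1 else 0 := by
  classical
  have h := ((isHermitian_conjTranspose_mul_self X).eigenvectorBasis).sum_inner_mul_inner
    (EuclideanSpace.single a (1:ℝ)) (EuclideanSpace.single b (1:ℝ))
  simp only [EuclideanSpace.inner_single_left, EuclideanSpace.inner_single_right,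
    starRingEnd_apply, star_trivial, one_mul, mul_one, EuclideanSpace.single_apply] at h
  unfold rv
  rw [h]
  simp [eq_comm]

lemma parseval (v : Fin n → ℝ) : ∑ j, (rv X j ⬝ᵥ v) ^ 2 = v ⬝ᵥ v := by
  have h1 : ∀ j, (rv X j ⬝ᵥ v)^2 = ∑ a, ∑ b, (rv X j a * rv X j b) * (v a * v b) := by
    intro j
    rw [sq, dotProduct, Finset.sum_mul_sum]
    exact Finset.sum_congr rfl fun a _ => Finset.sum_congr rfl fun b _ => by ring
  rw [Finset.sum_congr rfl fun j _ => h1 j]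
  rw [Finset.sum_comm]
  have h2 : ∀ a, ∑ j, ∑ b, (rv X j a * rv X j b) * (v a * v b)
      = ∑ b, (if a = b then 1 else 0) * (v a * v b) := by
    intro a
    rw [Finset.sum_comm]
    refine Finset.sum_congr rfl fun b _ => ?_
    rw [← Finset.sum_mul, rv_complete]
  rw [Finset.sum_congr rfl fun a _ => h2 a]
  simp [dotProduct, sq, mul_comm]

lemma mulVec_rv (j : Fin n) : (Xᵀ * X) *ᵥ rv X j = mu X j • rv X j :=
  (isHermitian_conjTranspose_mul_self X).mulVec_eigenvectorBasis j

lemma Xrv_dot (j k : Fin n) :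
    (X *ᵥ rv X j) ⬝ᵥ (X *ᵥ rv X k) = if j = k then mu X j else 0 := by
  have : (X *ᵥ rv X j) ⬝ᵥ (X *ᵥ rv X k) = ((Xᵀ * X) *ᵥ rv X j) ⬝ᵥ rv X k := by
    rw [Matrix.dotProduct_mulVec (X *ᵥ rv X j) X (rv X k), ← Matrix.mulVec_transpose,
      Matrix.mulVec_mulVec]
  rw [this, mulVec_rv, smul_dotProduct, rv_dot]
  by_cases h : j = k <;> simp [h, smul_eq_mul]

noncomputable def lv (j : Fin n) : Fin m → ℝ :=
  if mu X j = 0 then 0 else (sv X j)⁻¹ • (X *ᵥ rv X j)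

lemma X_mulVec_rv (j : Fin n) : X *ᵥ rv X j = sv X j • lv X j := by
  by_cases h : mu X j = 0
  · have h0 : (X *ᵥ rv X j) ⬝ᵥ (X *ᵥ rv X j) = 0 := by rw [Xrv_dot]; simp [h]
    have := (dotProduct_self_eq_zero (v := X *ᵥ rv X j)).mp h0
    rw [this, lv, if_pos h, smul_zero]
  · have hsv : sv X j ≠ 0 := by
      have := (mu_nonneg X j).lt_of_ne (Ne.symm h)
      exact ne_of_gt (Real.sqrt_pos.mpr this)
    rw [lv, if_neg h, smul_smul, mul_inv_cancel₀ hsv, one_smul]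

lemma lv_dot (j k : Fin n) :
    lv X j ⬝ᵥ lv X k = if j = k ∧ mu X j ≠ 0 then 1 else 0 := by
  by_cases hj : mu X j = 0
  · simp [lv, if_pos hj, hj, zero_dotProduct]
  by_cases hk : mu X k = 0
  · simp only [lv, if_neg hj, if_pos hk, dotProduct_zero]
    have : ¬(j = k ∧ mu X j ≠ 0) := fun ⟨h, _⟩ => hj (h ▸ hk)
    simp [this]
  rw [lv, lv, if_neg hj, if_neg hk, smul_dotProduct, dotProduct_smul, Xrv_dot]
  by_cases h : j = k
  · subst h
    have hsv : sv X j ≠ 0 := by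
      have := (mu_nonneg X j).lt_of_ne (Ne.symm hj)
      exact ne_of_gt (Real.sqrt_pos.mpr this)
    simp only [if_pos rfl, smul_eq_mul, hj, ne_eq, not_false_iff, and_true, if_true]
    rw [← sv_sq X j]
    field_simp
  · simp [h]

lemma lv_dot_self_le (j : Fin n) : lv X j ⬝ᵥ lv X j ≤ 1 := by
  rw [lv_dot]; split <;> norm_num

lemma lv_eq_zero (j : Fin n) (h : mu X j = 0) : lv X j = 0 := by rw [lv, if_pos h]

lemma decomp : X = ∑ j, sv X j • vecMulVec (lv X j) (rv X j) := by
  ext i i'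
  rw [Matrix.sum_apply]
  have h1 : ∀ j, (sv X j • vecMulVec (lv X j) (rv X j)) i i'
      = (X *ᵥ rv X j) i * rv X j i' := by
    intro j
    rw [X_mulVec_rv]
    simp [vecMulVec_apply, smul_eq_mul]
    ring
  rw [Finset.sum_congr rfl fun j _ => h1 j]
  have h2 : ∀ j, (X *ᵥ rv X j) i * rv X j i' = ∑ l, X i l * (rv X j l * rv X j i') := by
    intro j
    rw [Matrix.mulVec, dotProduct, Finset.sum_mul]
    exact Finset.sum_congr rfl fun l _ => by ring
  rw [Finset.sum_congr rfl fun j _ => h2 j, Finset.sum_comm]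
  have h3 : ∀ l, ∑ j, X i l * (rv X j l * rv X j i') = X i l * (if l = i' then 1 else 0) := by
    intro l
    rw [← Finset.mul_sum, rv_complete]
  rw [Finset.sum_congr rfl fun l _ => h3 l]
  simp

end SVD




lemma ip_sum_right (Q : Matrix (Fin m) (Fin n) ℝ) {ι : Type*} (s : Finset ι)
    (A : ι → Matrix (Fin m) (Fin n) ℝ) :
    ip Q (∑ k ∈ s, A k) = ∑ k ∈ s, ip Q (A k) := by
  unfold ip
  calc ∑ i, ∑ j, Q i j * (∑ k ∈ s, A k) i j
      = ∑ i, ∑ k ∈ s, ∑ j, Q i j * A k i j := by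
        refine Finset.sum_congr rfl fun i _ => ?_
        simp only [Matrix.sum_apply, Finset.mul_sum]
        exact Finset.sum_comm
    _ = ∑ k ∈ s, ∑ i, ∑ j, Q i j * A k i j := Finset.sum_comm

lemma ip_sum_left (Q : Matrix (Fin m) (Fin n) ℝ) {ι : Type*} (s : Finset ι)
    (A : ι → Matrix (Fin m) (Fin n) ℝ) :
    ip (∑ k ∈ s, A k) Q = ∑ k ∈ s, ip (A k) Q := by
  unfold ip
  calc ∑ i, ∑ j, (∑ k ∈ s, A k) i j * Q i j
      = ∑ i, ∑ k ∈ s, ∑ j, A k i j * Q i j := by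
        refine Finset.sum_congr rfl fun i _ => ?_
        simp only [Matrix.sum_apply, Finset.sum_mul]
        exact Finset.sum_comm
    _ = ∑ k ∈ s, ∑ i, ∑ j, A k i j * Q i j := Finset.sum_comm

lemma ip_smul_right (Q Y : Matrix (Fin m) (Fin n) ℝ) (a : ℝ) :
    ip Q (a • Y) = a * ip Q Y := by
  unfold ip
  rw [Finset.mul_sum]
  refine Finset.sum_congr rfl fun i _ => ?_
  rw [Finset.mul_sum]
  refine Finset.sum_congr rfl fun j _ => ?_
  simp [smul_eq_mul]
  ring

lemma ip_smul_left (Q Y : Matrix (Fin m) (Fin n) ℝ) (a : ℝ) :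
    ip (a • Q) Y = a * ip Q Y := by
  unfold ip
  rw [Finset.mul_sum]
  refine Finset.sum_congr rfl fun i _ => ?_
  rw [Finset.mul_sum]
  refine Finset.sum_congr rfl fun j _ => ?_
  simp [smul_eq_mul]
  ring

lemma ip_vecMulVec (Q : Matrix (Fin m) (Fin n) ℝ) (a : Fin m → ℝ) (b : Fin n → ℝ) :
    ip Q (vecMulVec a b) = a ⬝ᵥ (Q *ᵥ b) := by
  unfold ip
  rw [dotProduct]
  refine Finset.sum_congr rfl fun i _ => ?_
  rw [Matrix.mulVec, dotProduct, Finset.mul_sum]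
  refine Finset.sum_congr rfl fun j _ => ?_
  rw [vecMulVec_apply]
  ring

lemma dot_sum {ι : Type*} (s : Finset ι) (u : Fin m → ℝ) (f : ι → Fin m → ℝ) :
    u ⬝ᵥ (∑ j ∈ s, f j) = ∑ j ∈ s, u ⬝ᵥ f j := by
  simp only [dotProduct, Finset.sum_apply, Finset.mul_sum]
  exact Finset.sum_comm

lemma sum_dot {ι : Type*} (s : Finset ι) (u : Fin m → ℝ) (f : ι → Fin m → ℝ) :
    (∑ j ∈ s, f j) ⬝ᵥ u = ∑ j ∈ s, f j ⬝ᵥ u := by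
  rw [dotProduct_comm, dot_sum]
  exact Finset.sum_congr rfl fun j _ => dotProduct_comm _ _

/-- The dual certificate matrix. -/
noncomputable def W (X : Matrix (Fin m) (Fin n) ℝ) : Matrix (Fin m) (Fin n) ℝ :=
  ∑ j, vecMulVec (lv X j) (rv X j)

lemma ip_vecMulVec_vecMulVec (a u : Fin m → ℝ) (b v : Fin n → ℝ) :
    ip (vecMulVec a b) (vecMulVec u v) = (a ⬝ᵥ u) * (b ⬝ᵥ v) := by
  unfold ip
  rw [dotProduct, dotProduct, Finset.sum_mul_sum]
  refine Finset.sum_congr rfl fun i _ => Finset.sum_congr rfl fun j _ => ?_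
  rw [vecMulVec_apply, vecMulVec_apply]
  ring

lemma ip_W_vecMulVec (X : Matrix (Fin m) (Fin n) ℝ) (u : Fin m → ℝ) (v : Fin n → ℝ) :
    ip (W X) (vecMulVec u v) = ∑ j, (u ⬝ᵥ lv X j) * (rv X j ⬝ᵥ v) := by
  unfold W
  rw [ip_sum_left]
  refine Finset.sum_congr rfl fun j _ => ?_
  rw [ip_vecMulVec_vecMulVec]
  rw [dotProduct_comm (lv X j) u]

lemma bessel (X : Matrix (Fin m) (Fin n) ℝ) (u : Fin m → ℝ) :
    ∑ j, (u ⬝ᵥ lv X j) ^ 2 ≤ u ⬝ᵥ u := by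
  classical
  set c : Fin n → ℝ := fun j => u ⬝ᵥ lv X j with hc
  set s : Fin m → ℝ := ∑ j, c j • lv X j with hs
  have hnn : 0 ≤ (u - s) ⬝ᵥ (u - s) :=
    Finset.sum_nonneg fun i _ => mul_self_nonneg _
  have hus : u ⬝ᵥ s = ∑ j, c j ^ 2 := by
    rw [hs, dot_sum]
    refine Finset.sum_congr rfl fun j _ => ?_
    rw [dotProduct_smul, show u ⬝ᵥ lv X j = c j from rfl]
    simp [smul_eq_mul, sq]
  have hsu : s ⬝ᵥ u = ∑ j, c j ^ 2 := by rw [dotProduct_comm]; exact hus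
  have hss : s ⬝ᵥ s = ∑ j, c j ^ 2 := by
    rw [hs, sum_dot]
    refine Finset.sum_congr rfl fun j _ => ?_
    rw [smul_dotProduct, dot_sum]
    have h1 : ∀ k ∈ (Finset.univ : Finset (Fin n)), lv X j ⬝ᵥ c k • lv X k
        = if k = j then c j * (if mu X j ≠ 0 then 1 else 0) else 0 := by
      intro k _
      rw [dotProduct_smul, lv_dot]
      by_cases h : k = j
      · subst h; simp
      · have hno : ¬(j = k ∧ mu X j ≠ 0) := fun hh => h hh.1.symm
        simp [h, hno]
    rw [Finset.sum_congr rfl h1, Finset.sum_ite_eq' Finset.univ j]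
    simp only [Finset.mem_univ, if_true, smul_eq_mul]
    by_cases h : mu X j = 0
    · have : c j = 0 := by rw [hc]; simp [lv_eq_zero X j h]
      simp [this, h]
    · simp [h, sq]
  have hexp : (u - s) ⬝ᵥ (u - s) = u ⬝ᵥ u - ∑ j, c j ^ 2 := by
    rw [sub_dotProduct, dotProduct_sub, dotProduct_sub, hus, hsu, hss]
    ring
  rw [hexp] at hnn
  linarith

/-- local notation for the nuclear norm: sum of singular values -/
noncomputable def nn (X : Matrix (Fin m) (Fin n) ℝ) : ℝ := ∑ j, sv X j

lemma nn_nonneg (X : Matrix (Fin m) (Fin n) ℝ) : 0 ≤ nn X :=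
  Finset.sum_nonneg fun j _ => sv_nonneg X j

lemma W_bound (X : Matrix (Fin m) (Fin n) ℝ) (u : Fin m → ℝ) (v : Fin n → ℝ) :
    ip (W X) (vecMulVec u v) ≤ Real.sqrt (u ⬝ᵥ u) * Real.sqrt (v ⬝ᵥ v) := by
  rw [ip_W_vecMulVec]
  refine (Real.sum_mul_le_sqrt_mul_sqrt Finset.univ
    (fun j => u ⬝ᵥ lv X j) (fun j => rv X j ⬝ᵥ v)).trans ?_
  exact mul_le_mul (Real.sqrt_le_sqrt (bessel X u))
    (le_of_eq (congrArg Real.sqrt (parseval X v)))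
    (Real.sqrt_nonneg _) (Real.sqrt_nonneg _)

lemma W_bound_one (X : Matrix (Fin m) (Fin n) ℝ) (Y : Matrix (Fin m) (Fin n) ℝ) (k : Fin n) :
    ip (W X) (vecMulVec (lv Y k) (rv Y k)) ≤ 1 := by
  refine (W_bound X (lv Y k) (rv Y k)).trans ?_
  have h1 : Real.sqrt (lv Y k ⬝ᵥ lv Y k) ≤ 1 := Real.sqrt_le_one.mpr (lv_dot_self_le Y k)
  have h2 : Real.sqrt (rv Y k ⬝ᵥ rv Y k) = 1 := by
    rw [rv_dot]
    simp
  rw [h2, mul_one]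
  exact h1

lemma dual_le (X Y : Matrix (Fin m) (Fin n) ℝ) : ip (W X) Y ≤ nn Y := by
  have hd : ip (W X) Y = ∑ k, sv Y k * ip (W X) (vecMulVec (lv Y k) (rv Y k)) := by
    conv_lhs => rw [decomp Y]
    rw [ip_sum_right]
    exact Finset.sum_congr rfl fun k _ => ip_smul_right _ _ _
  rw [hd, nn]
  refine Finset.sum_le_sum fun k _ => ?_
  have := mul_le_mul_of_nonneg_left (W_bound_one X Y k) (sv_nonneg Y k)
  simpa using this

lemma ip_W_self (X : Matrix (Fin m) (Fin n) ℝ) : ip (W X) X = nn X := by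
  have hd : ip (W X) X = ∑ k, sv X k * ip (W X) (vecMulVec (lv X k) (rv X k)) := by
    conv_lhs => rw [show ip (W X) X
        = ip (W X) (∑ k, sv X k • vecMulVec (lv X k) (rv X k)) from by rw [← decomp X]]
    rw [ip_sum_right]
    exact Finset.sum_congr rfl fun k _ => ip_smul_right _ _ _
  rw [hd, nn]
  refine Finset.sum_congr rfl fun k _ => ?_
  rw [ip_W_vecMulVec]
  have h1 : ∀ j ∈ (Finset.univ : Finset (Fin n)),
      (lv X k ⬝ᵥ lv X j) * (rv X j ⬝ᵥ rv X k)
      = if j = k then (if mu X k = 0 then 0 else 1) else 0 := by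
    intro j _
    rw [rv_dot, lv_dot]
    by_cases h : j = k
    · subst h
      by_cases hm : mu X j = 0 <;> simp [hm]
    · simp [h, fun hh : k = j => h hh.symm]
  rw [Finset.sum_congr rfl h1, Finset.sum_ite_eq' Finset.univ k]
  simp only [Finset.mem_univ, if_true]
  by_cases hm : mu X k = 0
  · simp [hm, sv, Real.sqrt_eq_zero', hm.le]
  · simp [hm]

lemma ip_le_frob (Q : Matrix (Fin m) (Fin n) ℝ) (a : Fin m → ℝ) (b : Fin n → ℝ) :
    ip Q (vecMulVec a b) ≤ Real.sqrt (ip Q Q) * (Real.sqrt (a ⬝ᵥ a) * Real.sqrt (b ⬝ᵥ b)) := by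
  have key : ip Q (vecMulVec a b) = ∑ p : Fin m × Fin n, Q p.1 p.2 * (a p.1 * b p.2) := by
    rw [Fintype.sum_prod_type]
    unfold ip
    exact Finset.sum_congr rfl fun i _ => Finset.sum_congr rfl fun j _ => by
      rw [vecMulVec_apply]
  rw [key]
  refine (Real.sum_mul_le_sqrt_mul_sqrt Finset.univ
    (fun p : Fin m × Fin n => Q p.1 p.2) (fun p : Fin m × Fin n => a p.1 * b p.2)).trans ?_
  have e1 : ∑ p : Fin m × Fin n, Q p.1 p.2 ^ 2 = ip Q Q := by
    rw [Fintype.sum_prod_type]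
    unfold ip
    exact Finset.sum_congr rfl fun i _ => Finset.sum_congr rfl fun j _ => sq (Q i j)
  have e2 : ∑ p : Fin m × Fin n, (a p.1 * b p.2) ^ 2 = (a ⬝ᵥ a) * (b ⬝ᵥ b) := by
    rw [Fintype.sum_prod_type, dotProduct, dotProduct, Finset.sum_mul_sum]
    exact Finset.sum_congr rfl fun i _ => Finset.sum_congr rfl fun j _ => by ring
  rw [e1, e2, Real.sqrt_mul (show (0:ℝ) ≤ a ⬝ᵥ a from
    Finset.sum_nonneg fun i _ => mul_self_nonneg _) (b ⬝ᵥ b)]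

lemma frob (Q Y : Matrix (Fin m) (Fin n) ℝ) : ip Q Y ≤ Real.sqrt (ip Q Q) * nn Y := by
  have hd : ip Q Y = ∑ k, sv Y k * ip Q (vecMulVec (lv Y k) (rv Y k)) := by
    conv_lhs => rw [decomp Y]
    rw [ip_sum_right]
    exact Finset.sum_congr rfl fun k _ => ip_smul_right _ _ _
  rw [hd, nn, Finset.mul_sum]
  refine Finset.sum_le_sum fun k _ => ?_
  have hb : ip Q (vecMulVec (lv Y k) (rv Y k)) ≤ Real.sqrt (ip Q Q) := by
    refine (ip_le_frob Q (lv Y k) (rv Y k)).trans ?_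
    have h1 : Real.sqrt (lv Y k ⬝ᵥ lv Y k) ≤ 1 := Real.sqrt_le_one.mpr (lv_dot_self_le Y k)
    have h2 : Real.sqrt (rv Y k ⬝ᵥ rv Y k) = 1 := by rw [rv_dot]; simp
    rw [h2, mul_one]
    calc Real.sqrt (ip Q Q) * Real.sqrt (lv Y k ⬝ᵥ lv Y k)
        ≤ Real.sqrt (ip Q Q) * 1 := by
          exact mul_le_mul_of_nonneg_left h1 (Real.sqrt_nonneg _)
      _ = Real.sqrt (ip Q Q) := mul_one _
  calc sv Y k * ip Q (vecMulVec (lv Y k) (rv Y k))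
      ≤ sv Y k * Real.sqrt (ip Q Q) := mul_le_mul_of_nonneg_left hb (sv_nonneg Y k)
    _ = Real.sqrt (ip Q Q) * sv Y k := mul_comm _ _

lemma ip_self_nonneg (Q : Matrix (Fin m) (Fin n) ℝ) : 0 ≤ ip Q Q :=
  Finset.sum_nonneg fun i _ => Finset.sum_nonneg fun j _ => mul_self_nonneg _

lemma sum_mu_eq (X : Matrix (Fin m) (Fin n) ℝ) : ∑ j, mu X j = ip X X := by
  have hd : ip X X = ∑ k, sv X k * ip X (vecMulVec (lv X k) (rv X k)) := by
    conv_lhs => rw [show ip X X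
        = ip X (∑ k, sv X k • vecMulVec (lv X k) (rv X k)) from by rw [← decomp X]]
    rw [ip_sum_right]
    exact Finset.sum_congr rfl fun k _ => ip_smul_right _ _ _
  rw [hd]
  refine Finset.sum_congr rfl fun k _ => ?_
  rw [ip_vecMulVec, X_mulVec_rv, dotProduct_smul, lv_dot]
  by_cases hm : mu X k = 0
  · simp [hm, sv, Real.sqrt_eq_zero', hm.le]
  · simp only [hm, ne_eq, not_false_iff, and_true, if_pos rfl, smul_eq_mul, mul_one, if_true]
    rw [← sv_sq X k]
    ring

lemma eq_zero_of_nn_eq_zero (X : Matrix (Fin m) (Fin n) ℝ) (h : nn X = 0) : X = 0 := by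
  have hsv : ∀ j, sv X j = 0 := by
    intro j
    have := (Finset.sum_eq_zero_iff_of_nonneg (fun j _ => sv_nonneg X j)).mp h
    exact this j (Finset.mem_univ j)
  have hmu : ∀ j, mu X j = 0 := fun j => by
    rw [← sv_sq X j, hsv j]; ring
  have hip : ip X X = 0 := by
    rw [← sum_mu_eq]
    exact Finset.sum_eq_zero fun j _ => hmu j
  ext i j
  have h1 : ∀ i ∈ (Finset.univ : Finset (Fin m)), 0 ≤ ∑ j, X i j * X i j :=
    fun i _ => Finset.sum_nonneg fun j _ => mul_self_nonneg _
  have h2 := (Finset.sum_eq_zero_iff_of_nonneg h1).mp hip i (Finset.mem_univ i)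
  have h3 := (Finset.sum_eq_zero_iff_of_nonneg
    (fun j _ => mul_self_nonneg (X i j))).mp h2 j (Finset.mem_univ j)
  have := mul_self_eq_zero.mp h3
  simpa using this

lemma nuclearNorm_eq_nn (X : Matrix (Fin m) (Fin n) ℝ) : nuclearNorm X = nn X := rfl

lemma factor_decomp {d : ℕ} (U : Matrix (Fin m) (Fin d) ℝ) (V : Matrix (Fin n) (Fin d) ℝ) :
    U * Vᵀ = ∑ k, vecMulVec (fun i => U i k) (fun j => V j k) := by
  ext i j
  rw [Matrix.mul_apply, Matrix.sum_apply]
  exact Finset.sum_congr rfl fun k _ => by rw [vecMulVec_apply, Matrix.transpose_apply]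

lemma nn_zero : nn (0 : Matrix (Fin m) (Fin n) ℝ) = 0 := by
  have h0 : ∑ j, mu (0 : Matrix (Fin m) (Fin n) ℝ) j = 0 := by
    rw [sum_mu_eq]
    unfold ip
    simp
  have hmu : ∀ j, mu (0 : Matrix (Fin m) (Fin n) ℝ) j = 0 := by
    intro j
    exact (Finset.sum_eq_zero_iff_of_nonneg (fun j _ => mu_nonneg _ j)).mp h0 j
      (Finset.mem_univ j)
  unfold nn
  refine Finset.sum_eq_zero fun j _ => ?_
  rw [sv, hmu j, Real.sqrt_zero]

section ClaimA

variable (θb : ℝ)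

lemma elements_nonneg (h0 : 0 < θb) (h1 : θb < 1) {d : ℕ} (U : Matrix (Fin m) (Fin d) ℝ) (V : Matrix (Fin n) (Fin d) ℝ) :
    0 ≤ ((d : ℝ) * (1 - θb) / θb) * ∑ k, (∑ i, (U i k) ^ 2) * (∑ j, (V j k) ^ 2) := by
  have hc : (0:ℝ) ≤ (d : ℝ) * (1 - θb) / θb :=
    div_nonneg (mul_nonneg (Nat.cast_nonneg d) (by linarith)) h0.le
  refine mul_nonneg hc (Finset.sum_nonneg fun k _ => mul_nonneg ?_ ?_) <;>
    exact Finset.sum_nonneg fun _ _ => sq_nonneg _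

lemma claimA_lower (h0 : 0 < θb) (h1 : θb < 1) (X : Matrix (Fin m) (Fin n) ℝ) {d : ℕ}
    (U : Matrix (Fin m) (Fin d) ℝ) (V : Matrix (Fin n) (Fin d) ℝ) (hUV : U * Vᵀ = X) :
    ((1 - θb)/θb) * nn X ^ 2
      ≤ ((d : ℝ) * (1 - θb) / θb) * ∑ k, (∑ i, (U i k) ^ 2) * (∑ j, (V j k) ^ 2) := by
  set a : Fin d → ℝ := fun k => ∑ i, (U i k) ^ 2 with ha
  set b : Fin d → ℝ := fun k => ∑ j, (V j k) ^ 2 with hb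
  have hanneg : ∀ k, 0 ≤ a k := fun k => Finset.sum_nonneg fun _ _ => sq_nonneg _
  have hbnneg : ∀ k, 0 ≤ b k := fun k => Finset.sum_nonneg fun _ _ => sq_nonneg _
  -- Step 1 : nn X ≤ ∑ √(a k) √(b k)
  have step1 : nn X ≤ ∑ k, Real.sqrt (a k) * Real.sqrt (b k) := by
    have hchain : nn X = ∑ k, ip (W X) (vecMulVec (fun i => U i k) (fun j => V j k)) :=
      calc nn X = ip (W X) X := (ip_W_self X).symm
        _ = ip (W X) (U * Vᵀ) := by rw [hUV]
        _ = ip (W X) (∑ k, vecMulVec (fun i => U i k) (fun j => V j k)) := by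
            rw [factor_decomp]
        _ = ∑ k, ip (W X) (vecMulVec (fun i => U i k) (fun j => V j k)) :=
            ip_sum_right _ _ _
    rw [hchain]
    refine Finset.sum_le_sum fun k _ => ?_
    refine (W_bound X _ _).trans ?_
    have e1 : (fun i => U i k) ⬝ᵥ (fun i => U i k) = a k := by
      rw [ha, dotProduct]
      exact Finset.sum_congr rfl fun i _ => (sq (U i k)).symm
    have e2 : (fun j => V j k) ⬝ᵥ (fun j => V j k) = b k := by
      rw [hb, dotProduct]
      exact Finset.sum_congr rfl fun j _ => (sq (V j k)).symm
    rw [e1, e2]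
  -- Step 2 : (∑ √(a k * b k))² ≤ d ∑ a k * b k
  have step2 : (∑ k, Real.sqrt (a k) * Real.sqrt (b k)) ^ 2 ≤ (d : ℝ) * ∑ k, a k * b k := by
    have h := sq_sum_le_card_mul_sum_sq (s := (Finset.univ : Finset (Fin d)))
      (f := fun k => Real.sqrt (a k) * Real.sqrt (b k))
    have hcard : ((Finset.univ : Finset (Fin d)).card : ℝ) = (d : ℝ) := by simp
    have hsq : ∀ k ∈ (Finset.univ : Finset (Fin d)),
        (Real.sqrt (a k) * Real.sqrt (b k)) ^ 2 = a k * b k := by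
      intro k _
      rw [mul_pow, Real.sq_sqrt (hanneg k), Real.sq_sqrt (hbnneg k)]
    calc (∑ k, Real.sqrt (a k) * Real.sqrt (b k)) ^ 2
        ≤ ((Finset.univ : Finset (Fin d)).card : ℝ)
            * ∑ k, (Real.sqrt (a k) * Real.sqrt (b k)) ^ 2 := h
      _ = (d : ℝ) * ∑ k, a k * b k := by rw [hcard, Finset.sum_congr rfl hsq]
  have hnn2 : nn X ^ 2 ≤ (d : ℝ) * ∑ k, a k * b k := by
    refine le_trans ?_ step2
    exact pow_le_pow_left₀ (nn_nonneg X) step1 2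
  have hcpos : (0:ℝ) < (1 - θb)/θb := div_pos (by linarith) h0
  calc ((1 - θb)/θb) * nn X ^ 2
      ≤ ((1 - θb)/θb) * ((d : ℝ) * ∑ k, a k * b k) :=
        mul_le_mul_of_nonneg_left hnn2 hcpos.le
    _ = ((d : ℝ) * (1 - θb) / θb) * ∑ k, a k * b k := by ring

lemma triSet_nonempty (X : Matrix (Fin m) (Fin n) ℝ) :
    {t : ℝ | ∃ (d : ℕ) (U : Matrix (Fin m) (Fin d) ℝ) (V : Matrix (Fin n) (Fin d) ℝ),
      X.rank ≤ d ∧ U * Vᵀ = X ∧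
      t = ((d : ℝ) * (1 - θb) / θb) * ∑ k, (∑ i, (U i k) ^ 2) * (∑ j, (V j k) ^ 2)}.Nonempty := by
  refine ⟨_, n, X, 1, ?_, ?_, rfl⟩
  · exact (Matrix.rank_le_card_width X).trans (Fintype.card_fin n).le
  · rw [Matrix.transpose_one, Matrix.mul_one]

lemma triSet_bddBelow (h0 : 0 < θb) (h1 : θb < 1) (X : Matrix (Fin m) (Fin n) ℝ) :
    BddBelow {t : ℝ | ∃ (d : ℕ) (U : Matrix (Fin m) (Fin d) ℝ) (V : Matrix (Fin n) (Fin d) ℝ),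
      X.rank ≤ d ∧ U * Vᵀ = X ∧
      t = ((d : ℝ) * (1 - θb) / θb) * ∑ k, (∑ i, (U i k) ^ 2) * (∑ j, (V j k) ^ 2)} := by
  refine ⟨0, ?_⟩
  rintro t ⟨d, U, V, -, -, rfl⟩
  exact elements_nonneg θb h0 h1 U V

lemma claimA_upper_eps (h0 : 0 < θb) (h1 : θb < 1) (X : Matrix (Fin m) (Fin n) ℝ)
    (hX : X ≠ 0) {ε : ℝ} (hε : 0 < ε) :
    triNormSq θb X ≤ ((1 - θb)/θb) * nn X ^ 2 + ε := by
  classical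
  set c : ℝ := (1 - θb)/θb with hcdef
  have hcpos : (0:ℝ) < c := div_pos (by linarith) h0
  set N : ℝ := nn X with hNdef
  have hNpos : 0 < N := by
    rcases (nn_nonneg X).lt_or_eq with h | h
    · exact h
    · exact absurd (eq_zero_of_nn_eq_zero X h.symm) hX
  -- choose M
  set M : ℕ := ⌈c * n * N^2 / ε⌉₊ + 1 with hMdef
  have hM1 : 1 ≤ M := Nat.le_add_left 1 _
  have hMposR : (0:ℝ) < M := by
    have : (0:ℕ) < M := Nat.lt_of_lt_of_le Nat.one_pos hM1
    exact_mod_cast this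
  have hMbig : c * n * N^2 / M < ε := by
    have h1' : c * n * N^2 / ε ≤ (⌈c * n * N^2 / ε⌉₊ : ℝ) := Nat.le_ceil _
    have h2' : ((⌈c * n * N^2 / ε⌉₊ : ℕ) : ℝ) < (M : ℝ) := by
      rw [hMdef]
      exact_mod_cast Nat.lt_succ_self _
    have h3' : c * n * N^2 / ε < (M : ℝ) := lt_of_le_of_lt h1' h2'
    have h4' : c * n * N^2 < (M : ℝ) * ε := by
      have := (div_lt_iff₀ hε).mp h3'
      linarith
    rw [div_lt_iff₀ hMposR]
    linarith
  -- multiplicities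
  set t' : Fin n → ℕ := fun j => if mu X j = 0 then 0 else ⌈(M:ℝ) * sv X j / N⌉₊ with ht'def
  have hsv_pos : ∀ j, mu X j ≠ 0 → 0 < sv X j := fun j hj =>
    Real.sqrt_pos.mpr ((mu_nonneg X j).lt_of_ne (Ne.symm hj))
  have ht'pos : ∀ j, mu X j ≠ 0 → 1 ≤ t' j := by
    intro j hj
    have : 0 < ⌈(M:ℝ) * sv X j / N⌉₊ :=
      Nat.ceil_pos.mpr (div_pos (mul_pos hMposR (hsv_pos j hj)) hNpos)
    rw [ht'def]
    simpa [hj] using this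
  have ht'zero : ∀ j, mu X j = 0 → t' j = 0 := by
    intro j hj
    rw [ht'def]
    simp [hj]
  have hsv_zero : ∀ j, mu X j = 0 → sv X j = 0 := fun j hj => by
    rw [sv, hj, Real.sqrt_zero]
  set d : ℕ := ∑ j, t' j with hddef
  -- rank bound
  have hrank : X.rank ≤ d := by
    have h1' : X.rank = (Xᴴ * X).rank := (Matrix.rank_conjTranspose_mul_self X).symm
    have h2' := (Matrix.isHermitian_conjTranspose_mul_self X).rank_eq_card_non_zero_eigs
    have h3' : X.rank = Fintype.card {j // mu X j ≠ 0} := by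
      rw [h1', h2']
      rfl
    rw [h3', Fintype.card_subtype]
    calc (Finset.univ.filter (fun j => mu X j ≠ 0)).card
        = ∑ j, if mu X j ≠ 0 then 1 else 0 := Finset.card_filter _ _
      _ ≤ ∑ j, t' j := by
          refine Finset.sum_le_sum fun j _ => ?_
          by_cases hj : mu X j = 0
          · simp [hj]
          · simpa [hj] using ht'pos j hj
  -- the index equivalence
  have hcard : Fintype.card (Σ j : Fin n, Fin (t' j)) = d := by
    simp [hddef]
  let e : (Σ j : Fin n, Fin (t' j)) ≃ Fin d := Fintype.equivFinOfCardEq hcard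
  set g : Fin d → Fin n := fun k => (e.symm k).1 with hgdef
  have hsum : ∀ (F : Fin n → ℝ), ∑ k, F (g k) = ∑ j, (t' j : ℝ) * F j := by
    intro F
    have h1' : ∑ s : (Σ j : Fin n, Fin (t' j)), F (g (e s)) = ∑ k, F (g k) :=
      Equiv.sum_comp e (fun k => F (g k))
    have h2' : ∀ s : (Σ j : Fin n, Fin (t' j)), g (e s) = s.1 := by
      intro s
      rw [hgdef]
      simp
    rw [← h1', Finset.sum_congr rfl fun s _ => by rw [h2' s]]
    rw [← Finset.univ_sigma_univ, Finset.sum_sigma]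
    simp [Finset.sum_const, mul_comm]
  set α : Fin n → ℝ := fun j => Real.sqrt (sv X j / t' j) with hαdef
  have hα_sq : ∀ j, α j ^ 2 = sv X j / t' j := fun j =>
    Real.sq_sqrt (div_nonneg (sv_nonneg X j) (Nat.cast_nonneg _))
  set U : Matrix (Fin m) (Fin d) ℝ := Matrix.of fun i k => α (g k) * lv X (g k) i with hUdef
  set V : Matrix (Fin n) (Fin d) ℝ := Matrix.of fun j' k => α (g k) * rv X (g k) j' with hVdef
  have hterm : ∀ j i j', (t' j : ℝ) * ((α j)^2 * (lv X j i * rv X j j'))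
      = sv X j * (lv X j i * rv X j j') := by
    intro j i j'
    by_cases hj : mu X j = 0
    · rw [ht'zero j hj, hsv_zero j hj]
      simp
    · have ht'ne : ((t' j : ℝ)) ≠ 0 := by
        have := ht'pos j hj
        positivity
      rw [hα_sq j]
      field_simp
  have hUV : U * Vᵀ = X := by
    ext i j'
    rw [Matrix.mul_apply]
    have hcol : ∀ k, U i k * Vᵀ k j' = (α (g k))^2 * (lv X (g k) i * rv X (g k) j') := by
      intro k
      rw [Matrix.transpose_apply, hUdef, hVdef]
      simp only [Matrix.of_apply]
      ring
    rw [Finset.sum_congr rfl fun k _ => hcol k,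
      hsum (fun j => (α j)^2 * (lv X j i * rv X j j')),
      Finset.sum_congr rfl fun j _ => hterm j i j']
    have := congrFun (congrFun (decomp X) i) j'
    rw [this]
    rw [Matrix.sum_apply]
    refine (Finset.sum_congr rfl fun j _ => ?_).symm
    simp only [Matrix.smul_apply, vecMulVec_apply, smul_eq_mul]
  -- column norms
  have hUcol : ∀ k, (∑ i, (U i k) ^ 2) = (α (g k))^2 * (lv X (g k) ⬝ᵥ lv X (g k)) := by
    intro k
    rw [dotProduct, Finset.mul_sum]
    refine Finset.sum_congr rfl fun i _ => ?_
    rw [hUdef]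
    simp only [Matrix.of_apply]
    ring
  have hVcol : ∀ k, (∑ j', (V j' k) ^ 2) = (α (g k))^2 := by
    intro k
    have : (∑ j', (V j' k) ^ 2) = (α (g k))^2 * (rv X (g k) ⬝ᵥ rv X (g k)) := by
      rw [dotProduct, Finset.mul_sum]
      refine Finset.sum_congr rfl fun j' _ => ?_
      rw [hVdef]
      simp only [Matrix.of_apply]
      ring
    rw [this, rv_dot]
    simp
  set F : Fin n → ℝ := fun j => ((α j)^2)^2 * (lv X j ⬝ᵥ lv X j) with hFdef
  have hFnonneg : ∀ j, 0 ≤ F j := by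
    intro j
    refine mul_nonneg (sq_nonneg _) ?_
    rw [lv_dot]
    split <;> norm_num
  have hprod : ∀ k, (∑ i, (U i k) ^ 2) * (∑ j', (V j' k) ^ 2) = F (g k) := by
    intro k
    rw [hUcol k, hVcol k, hFdef]
    ring
  have hFbound : ∀ j, (t' j : ℝ) * F j ≤ sv X j * N / M := by
    intro j
    by_cases hj : mu X j = 0
    · rw [ht'zero j hj, hsv_zero j hj]
      simp
    · have hlv : lv X j ⬝ᵥ lv X j = 1 := by rw [lv_dot]; simp [hj]
      have ht'ge : (M:ℝ) * sv X j / N ≤ (t' j : ℝ) := by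
        have : t' j = ⌈(M:ℝ) * sv X j / N⌉₊ := by rw [ht'def]; simp [hj]
        rw [this]
        exact Nat.le_ceil _
      have ht'posR : (0:ℝ) < (t' j : ℝ) := by
        have := ht'pos j hj
        exact_mod_cast Nat.lt_of_lt_of_le Nat.zero_lt_one this
      have hsvp := hsv_pos j hj
      rw [hFdef]
      simp only
      rw [hα_sq j, hlv, mul_one]
      have hLHS : (t' j : ℝ) * (sv X j / (t' j : ℝ))^2 = sv X j ^2 / (t' j : ℝ) := by
        field_simp
      rw [hLHS, div_le_div_iff₀ ht'posR hMposR]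
      nlinarith [mul_le_mul_of_nonneg_left ((div_le_iff₀ hNpos).mp ht'ge) hsvp.le]
  have hsum_le : ∑ j, (t' j : ℝ) * F j ≤ N^2 / M := by
    refine (Finset.sum_le_sum fun j _ => hFbound j).trans ?_
    have : ∑ j, sv X j * N / M = N * N / M := by
      rw [← Finset.sum_div, ← Finset.sum_mul]
      rw [hNdef, nn]
    rw [this, sq]
  have hd_le : (d : ℝ) ≤ (M : ℝ) + n := by
    have hcast : (d : ℝ) = ∑ j, (t' j : ℝ) := by
      rw [hddef]
      push_cast
      rfl
    have hj_le : ∀ j, (t' j : ℝ) ≤ (M:ℝ) * sv X j / N + 1 := by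
      intro j
      by_cases hj : mu X j = 0
      · rw [ht'zero j hj, hsv_zero j hj]
        simp
      · have : t' j = ⌈(M:ℝ) * sv X j / N⌉₊ := by rw [ht'def]; simp [hj]
        rw [this]
        exact le_of_lt (Nat.ceil_lt_add_one
          (div_nonneg (mul_nonneg hMposR.le (sv_nonneg X j)) hNpos.le))
    rw [hcast]
    refine (Finset.sum_le_sum fun j _ => hj_le j).trans ?_
    rw [Finset.sum_add_distrib]
    have : ∑ j, (M:ℝ) * sv X j / N = M := by
      rw [← Finset.sum_div, ← Finset.mul_sum, ← nn, ← hNdef]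
      field_simp
    rw [this]
    simp
  -- the value of the candidate factorization
  have hval : ((d : ℝ) * (1 - θb) / θb) * ∑ k, (∑ i, (U i k) ^ 2) * (∑ j', (V j' k) ^ 2)
      ≤ c * N ^ 2 + ε := by
    rw [Finset.sum_congr rfl fun k _ => hprod k, hsum F]
    have hSnonneg : (0:ℝ) ≤ ∑ j, (t' j : ℝ) * F j :=
      Finset.sum_nonneg fun j _ => mul_nonneg (Nat.cast_nonneg _) (hFnonneg j)
    have hdS : (d : ℝ) * ∑ j, (t' j : ℝ) * F j ≤ ((M:ℝ) + n) * (N^2 / M) := by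
      refine mul_le_mul hd_le hsum_le hSnonneg ?_
      positivity
    have hfinal : ((M:ℝ) + n) * (N^2 / M) = N^2 + n * N^2 / M := by
      field_simp
    calc ((d : ℝ) * (1 - θb) / θb) * ∑ j, (t' j : ℝ) * F j
        = c * ((d : ℝ) * ∑ j, (t' j : ℝ) * F j) := by rw [hcdef]; ring
      _ ≤ c * (((M:ℝ) + n) * (N^2 / M)) := mul_le_mul_of_nonneg_left hdS hcpos.le
      _ = c * N^2 + c * n * N^2 / M := by rw [hfinal]; ring
      _ ≤ c * N^2 + ε := by linarith
  have hmem : ((d : ℝ) * (1 - θb) / θb) * ∑ k, (∑ i, (U i k) ^ 2) * (∑ j', (V j' k) ^ 2)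
      ∈ {t : ℝ | ∃ (d : ℕ) (U : Matrix (Fin m) (Fin d) ℝ) (V : Matrix (Fin n) (Fin d) ℝ),
        X.rank ≤ d ∧ U * Vᵀ = X ∧
        t = ((d : ℝ) * (1 - θb) / θb) * ∑ k, (∑ i, (U i k) ^ 2) * (∑ j, (V j k) ^ 2)} :=
    ⟨d, U, V, hrank, hUV, rfl⟩
  exact (csInf_le (triSet_bddBelow θb h0 h1 X) hmem).trans hval

lemma triNormSq_eq (h0 : 0 < θb) (h1 : θb < 1) (X : Matrix (Fin m) (Fin n) ℝ) :
    triNormSq θb X = ((1 - θb)/θb) * nn X ^ 2 := by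
  classical
  refine le_antisymm ?_ ?_
  · by_cases hX : X = 0
    · subst hX
      have hmem : (((0:ℕ) : ℝ) * (1 - θb) / θb)
          * ∑ k : Fin 0, (∑ i, ((0 : Matrix (Fin m) (Fin 0) ℝ) i k) ^ 2)
            * (∑ j, ((0 : Matrix (Fin n) (Fin 0) ℝ) j k) ^ 2)
          ∈ {t : ℝ | ∃ (d : ℕ) (U : Matrix (Fin m) (Fin d) ℝ) (V : Matrix (Fin n) (Fin d) ℝ),
            (0 : Matrix (Fin m) (Fin n) ℝ).rank ≤ d ∧ U * Vᵀ = 0 ∧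
            t = ((d : ℝ) * (1 - θb) / θb) * ∑ k, (∑ i, (U i k) ^ 2) * (∑ j, (V j k) ^ 2)} := by
        refine ⟨0, 0, 0, ?_, ?_, rfl⟩
        · rw [Matrix.rank_zero]
        · ext i j
          simp [Matrix.mul_apply]
      have h := csInf_le (triSet_bddBelow θb h0 h1 0) hmem
      have hv : (((0:ℕ) : ℝ) * (1 - θb) / θb)
          * ∑ k : Fin 0, (∑ i, ((0 : Matrix (Fin m) (Fin 0) ℝ) i k) ^ 2)
            * (∑ j, ((0 : Matrix (Fin n) (Fin 0) ℝ) j k) ^ 2) = 0 := by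
        simp
      rw [hv] at h
      refine h.trans ?_
      rw [nn_zero]
      norm_num
    · exact le_of_forall_pos_le_add fun ε hε => claimA_upper_eps θb h0 h1 X hX hε
  · refine le_csInf (triSet_nonempty θb X) ?_
    rintro t ⟨d, U, V, -, hUV, rfl⟩
    exact claimA_lower θb h0 h1 X U V hUV

end ClaimA

lemma ip_comm (Q Y : Matrix (Fin m) (Fin n) ℝ) : ip Q Y = ip Y Q := by
  unfold ip
  exact Finset.sum_congr rfl fun i _ => Finset.sum_congr rfl fun j _ => mul_comm _ _

end TriAux

open TriAux

/-- The convex envelope (Fenchel biconjugate) of `X ↦ (1/2)‖X‖_△²` is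
`X ↦ ((1-θ̄)/(2θ̄)) ‖X‖_⋆²`, the scaled squared nuclear norm. -/
theorem convex_envelope_triNormSq (θb : ℝ) (h0 : 0 < θb) (h1 : θb < 1) {m n : ℕ}
    (X : Matrix (Fin m) (Fin n) ℝ) :
    fenchel (fenchel (fun Y => (1 / 2) * triNormSq θb Y)) X =
      ((1 - θb) / (2 * θb)) * (nuclearNorm X) ^ 2 := by
  classical
  have hθ : θb ≠ 0 := ne_of_gt h0
  set κ : ℝ := (1 - θb) / (2 * θb) with hκdef
  have hκ : 0 < κ := div_pos (by linarith) (by linarith)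
  have hfun : (fun Y : Matrix (Fin m) (Fin n) ℝ => (1 / 2) * triNormSq θb Y)
      = fun Y : Matrix (Fin m) (Fin n) ℝ => κ * nn Y ^ 2 := by
    funext Y
    rw [triNormSq_eq θb h0 h1 Y, hκdef]
    field_simp
  rw [hfun]
  set f : Matrix (Fin m) (Fin n) ℝ → ℝ := fun Y => κ * nn Y ^ 2 with hfdef
  -- inner conjugate: boundedness and nonemptiness
  have hSne : ∀ Q : Matrix (Fin m) (Fin n) ℝ,
      {t : ℝ | ∃ Y : Matrix (Fin m) (Fin n) ℝ,
        t = (∑ i, ∑ j, Q i j * Y i j) - f Y}.Nonempty :=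
    fun Q => ⟨_, ⟨0, rfl⟩⟩
  have hkey : ∀ Q Y : Matrix (Fin m) (Fin n) ℝ,
      (∑ i, ∑ j, Q i j * Y i j) - f Y ≤ Real.sqrt (ip Q Q) * nn Y - κ * nn Y ^ 2 := by
    intro Q Y
    have h := frob Q Y
    have he : (∑ i, ∑ j, Q i j * Y i j) = ip Q Y := rfl
    have hfY : f Y = κ * nn Y ^ 2 := rfl
    rw [he, hfY]
    linarith
  have hbdd : ∀ Q : Matrix (Fin m) (Fin n) ℝ,
      BddAbove {t : ℝ | ∃ Y : Matrix (Fin m) (Fin n) ℝ,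
        t = (∑ i, ∑ j, Q i j * Y i j) - f Y} := by
    intro Q
    refine ⟨Real.sqrt (ip Q Q) ^ 2 / (4 * κ), ?_⟩
    rintro t ⟨Y, rfl⟩
    refine (hkey Q Y).trans ?_
    rw [le_div_iff₀ (by linarith : (0:ℝ) < 4 * κ)]
    nlinarith [sq_nonneg (Real.sqrt (ip Q Q) - 2 * κ * nn Y)]
  have hg_lower : ∀ Q Y : Matrix (Fin m) (Fin n) ℝ,
      (∑ i, ∑ j, Q i j * Y i j) - f Y ≤ fenchel f Q :=
    fun Q Y => le_csSup (hbdd Q) ⟨Y, rfl⟩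
  -- outer sup: upper bound
  have hub : ∀ t ∈ {t : ℝ | ∃ Q : Matrix (Fin m) (Fin n) ℝ,
      t = (∑ i, ∑ j, X i j * Q i j) - fenchel f Q}, t ≤ κ * nn X ^ 2 := by
    rintro t ⟨Q, rfl⟩
    have h := hg_lower Q X
    have he : (∑ i, ∑ j, X i j * Q i j) = (∑ i, ∑ j, Q i j * X i j) :=
      Finset.sum_congr rfl fun i _ => Finset.sum_congr rfl fun j _ => mul_comm _ _
    rw [he]
    have hfX : f X = κ * nn X ^ 2 := rfl
    rw [← hfX]
    linarith
  have hne2 : {t : ℝ | ∃ Q : Matrix (Fin m) (Fin n) ℝ,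
      t = (∑ i, ∑ j, X i j * Q i j) - fenchel f Q}.Nonempty := ⟨_, ⟨0, rfl⟩⟩
  -- the optimal dual variable
  set Qs : Matrix (Fin m) (Fin n) ℝ := (2 * κ * nn X) • W X with hQsdef
  have hipQs : ∀ Y : Matrix (Fin m) (Fin n) ℝ,
      ip Qs Y = (2 * κ * nn X) * ip (W X) Y := fun Y => ip_smul_left _ _ _
  have hgQs : fenchel f Qs ≤ κ * nn X ^ 2 := by
    refine csSup_le (hSne Qs) ?_
    rintro t ⟨Y, rfl⟩
    have he : (∑ i, ∑ j, Qs i j * Y i j) = ip Qs Y := rfl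
    have hfY : f Y = κ * nn Y ^ 2 := rfl
    rw [he, hipQs Y, hfY]
    have hd := dual_le X Y
    have h2 : (2 * κ * nn X) * ip (W X) Y ≤ (2 * κ * nn X) * nn Y := by
      refine mul_le_mul_of_nonneg_left hd ?_
      have := nn_nonneg X
      positivity
    nlinarith [mul_nonneg hκ.le (sq_nonneg (nn X - nn Y))]
  have hlb : κ * nn X ^ 2 ≤ sSup {t : ℝ | ∃ Q : Matrix (Fin m) (Fin n) ℝ,
      t = (∑ i, ∑ j, X i j * Q i j) - fenchel f Q} := by
    have hmem : ((∑ i, ∑ j, X i j * Qs i j) - fenchel f Qs)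
        ∈ {t : ℝ | ∃ Q : Matrix (Fin m) (Fin n) ℝ,
          t = (∑ i, ∑ j, X i j * Q i j) - fenchel f Q} := ⟨Qs, rfl⟩
    have hbdd2 : BddAbove {t : ℝ | ∃ Q : Matrix (Fin m) (Fin n) ℝ,
        t = (∑ i, ∑ j, X i j * Q i j) - fenchel f Q} := ⟨κ * nn X ^ 2, hub⟩
    refine le_trans ?_ (le_csSup hbdd2 hmem)
    have he : (∑ i, ∑ j, X i j * Qs i j) = ip Qs X := by
      rw [ip_comm]
      rfl
    rw [he, hipQs X, ip_W_self X]
    nlinarith [hgQs, sq_nonneg (nn X)]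
  have hmain : fenchel (fenchel f) X = κ * nn X ^ 2 := by
    refine le_antisymm ?_ ?_
    · exact csSup_le hne2 hub
    · exact hlb
  rw [hmain, nuclearNorm_eq_nn]
end

section
/- Let X be an m×n real matrix with singular value decomposition X = L Σ Rᵀ and λ > 0. Let σ̄_d(X) be the average of the top d singular values of X, let d be the largest integer such that σ_d(X) > (λd/(1+λd)) σ̄_d(X), and set μ = (λd/(1+λd)) σ̄_d(X). Then Y = L S_μ(Σ) Rᵀ is the unique minimizer over Y of ‖X − Y‖_F² + λ‖Y‖_⋆², where S_μ soft-thresholds the singular values at level μ. -/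
open Matrix Finset

/-- Contraction predicate: `‖C x‖ ≤ ‖x‖` for all `x`. -/
def IsContr {m n : ℕ} (C : Matrix (Fin m) (Fin n) ℝ) : Prop :=
  ∀ x : Fin n → ℝ, (C *ᵥ x) ⬝ᵥ (C *ᵥ x) ≤ x ⬝ᵥ x

lemma nn_nonneg {m n : ℕ} (W : Matrix (Fin m) (Fin n) ℝ) : 0 ≤ nuclearNorm W :=
  Finset.sum_nonneg fun _ _ => Real.sqrt_nonneg _

lemma vecMul_eq {m n : ℕ} (C : Matrix (Fin m) (Fin n) ℝ) (v : Fin m → ℝ) :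
    v ᵥ* C = Cᵀ *ᵥ v := by
  rw [← Matrix.vecMul_transpose, Matrix.transpose_transpose]

lemma dot_self_mulVec {m n : ℕ} (C : Matrix (Fin m) (Fin n) ℝ) (x : Fin n → ℝ) :
    (C *ᵥ x) ⬝ᵥ (C *ᵥ x) = x ⬝ᵥ ((Cᵀ * C) *ᵥ x) := by
  rw [← Matrix.mulVec_mulVec, Matrix.dotProduct_mulVec, vecMul_eq, dotProduct_comm]

lemma trace_transpose_mul {m n : ℕ} (C M : Matrix (Fin m) (Fin n) ℝ) :
    Matrix.trace (Cᵀ * M) = ∑ i, ∑ j, C i j * M i j := by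
  rw [Matrix.trace]
  simp only [Matrix.diag, Matrix.mul_apply, Matrix.transpose_apply]
  exact Finset.sum_comm

lemma sum_delta {N : ℕ} (k : ℕ) (f : Fin N → ℝ) (hf : ∀ i : Fin N, (i : ℕ) ≠ k → f i = 0) :
    ∑ i, f i = if h : k < N then f ⟨k, h⟩ else 0 := by
  by_cases h : k < N
  · rw [dif_pos h]
    exact Finset.sum_eq_single ⟨k, h⟩ (fun b _ hb => hf b (fun e => hb (Fin.ext e)))
      (fun h' => absurd (mem_univ _) h')
  · rw [dif_neg h]
    exact Finset.sum_eq_zero fun i _ => hf i (fun e => h (e ▸ i.2))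

lemma sum_fin_val {n : ℕ} (X : ℕ → ℝ) : ∑ i : Fin n, X i.1 = ∑ i ∈ range n, X i :=
  Fin.sum_univ_eq_sum_range X n

lemma range_min_filter (m n : ℕ) : (range n).filter (· < m) = range (min m n) := by
  ext a
  simp [Nat.lt_min, and_comm]

lemma sum_fin_ite {m n : ℕ} (f : ℕ → ℝ) :
    (∑ j : Fin n, if (j : ℕ) < m then f j else 0) = ∑ i ∈ range (min m n), f i := by
  rw [sum_fin_val (fun j => if j < m then f j else 0), ← Finset.sum_filter, range_min_filter]

lemma sum_range_min {m n : ℕ} (f : ℕ → ℝ) (hf : ∀ i, n ≤ i → f i = 0) :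
    ∑ i ∈ range m, f i = ∑ i ∈ range (min m n), f i := by
  apply (Finset.sum_subset (Finset.range_subset_range.mpr (min_le_left m n)) _).symm
  intro x hx hx'
  simp only [mem_range, Nat.lt_min, not_and, not_lt] at hx hx'
  exact hf x (hx' hx)

lemma nn_fact {m n : ℕ} (W : Matrix (Fin m) (Fin n) ℝ) :
    ∃ (A : Matrix (Fin m) (Fin n) ℝ) (B : Matrix (Fin n) (Fin n) ℝ)
      (C : Matrix (Fin m) (Fin n) ℝ),
      W = A * Bᵀ ∧ (∑ k, ∑ i, (A i k)^2) = nuclearNorm W ∧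
      (∑ k, ∑ i, (B i k)^2) = nuclearNorm W ∧
      IsContr C ∧ Matrix.trace (Cᵀ * W) = nuclearNorm W := by
  classical
  have hG := Matrix.isHermitian_conjTranspose_mul_self W
  set ε : Fin n → ℝ := hG.eigenvalues with hε
  have hεnn : ∀ j, 0 ≤ ε j := fun j =>
    (Matrix.posSemidef_conjTranspose_mul_self W).eigenvalues_nonneg j
  set V : Matrix (Fin n) (Fin n) ℝ :=
    (Matrix.IsHermitian.eigenvectorUnitary hG : Matrix (Fin n) (Fin n) ℝ) with hV
  have hV1 : Vᵀ * V = 1 := by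
    have := Matrix.mem_unitaryGroup_iff'.mp (Matrix.IsHermitian.eigenvectorUnitary hG).2
    rw [Matrix.star_eq_conjTranspose, Matrix.conjTranspose_eq_transpose_of_trivial] at this
    exact this
  have hV2 : V * Vᵀ = 1 := by
    have := Matrix.mem_unitaryGroup_iff.mp (Matrix.IsHermitian.eigenvectorUnitary hG).2
    rw [Matrix.star_eq_conjTranspose] at this
    exact this
  have hWW : Wᵀ * W = V * Matrix.diagonal ε * Vᵀ := by
    have h := hG.spectral_theorem
    rw [Unitary.conjStarAlgAut_apply, Matrix.star_eq_conjTranspose,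
      RCLike.ofReal_real_eq_id, Function.id_comp] at h
    exact h
  have hnn : nuclearNorm W = ∑ j, Real.sqrt (ε j) := rfl
  set M : Matrix (Fin m) (Fin n) ℝ := W * V with hM
  have hMM : Mᵀ * M = Matrix.diagonal ε := by
    rw [hM, Matrix.transpose_mul]
    calc Vᵀ * Wᵀ * (W * V) = Vᵀ * (Wᵀ * W) * V := by simp only [Matrix.mul_assoc]
    _ = Vᵀ * (V * Matrix.diagonal ε * Vᵀ) * V := by rw [hWW]
    _ = (Vᵀ * V) * Matrix.diagonal ε * (Vᵀ * V) := by simp only [Matrix.mul_assoc]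
    _ = Matrix.diagonal ε := by rw [hV1]; simp
  have hcol : ∀ k, (∑ i, (M i k)^2) = ε k := by
    intro k
    have h1 : (Mᵀ * M) k k = Matrix.diagonal ε k k := by rw [hMM]
    simpa [Matrix.mul_apply, Matrix.transpose_apply, pow_two] using h1
  have hM0 : ∀ k, ε k = 0 → ∀ i, M i k = 0 := by
    intro k hk i
    have h1 := hcol k
    rw [hk] at h1
    have h2 : ∀ j ∈ (univ : Finset (Fin m)), (0:ℝ) ≤ (M j k)^2 := fun j _ => sq_nonneg _
    have := (Finset.sum_eq_zero_iff_of_nonneg h2).mp h1 i (mem_univ i)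
    exact pow_eq_zero_iff (two_ne_zero) |>.mp this
  set q : Fin n → ℝ := fun j => Real.sqrt (Real.sqrt (ε j)) with hq
  set f : Fin n → ℝ := fun j => if ε j = 0 then 0 else (Real.sqrt (Real.sqrt (ε j)))⁻¹ with hf
  set g : Fin n → ℝ := fun j => if ε j = 0 then 0 else (Real.sqrt (ε j))⁻¹ with hg
  refine ⟨M * Matrix.diagonal f, V * Matrix.diagonal q, M * Matrix.diagonal g * Vᵀ, ?_, ?_, ?_, ?_, ?_⟩
  · -- W = A * Bᵀ
    have hfq : ∀ j, f j * q j = if ε j = 0 then 0 else 1 := by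
      intro j
      by_cases h : ε j = 0
      · simp [hf, hq, h]
      · have h1 : 0 < Real.sqrt (Real.sqrt (ε j)) := by
          apply Real.sqrt_pos.mpr
          apply Real.sqrt_pos.mpr
          exact lt_of_le_of_ne (hεnn j) (Ne.symm h)
        simp [hf, hq, h, inv_mul_cancel₀ (ne_of_gt h1)]
    have key : M * Matrix.diagonal (fun j => f j * q j) = M := by
      ext i j
      rw [Matrix.mul_diagonal, hfq j]
      by_cases h : ε j = 0
      · simp [h, hM0 j h i]
      · simp [h]
    calc W = M * Vᵀ := by rw [hM]; rw [Matrix.mul_assoc, hV2, Matrix.mul_one]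
    _ = M * Matrix.diagonal (fun j => f j * q j) * Vᵀ := by rw [key]
    _ = M * (Matrix.diagonal f * Matrix.diagonal q) * Vᵀ := by rw [Matrix.diagonal_mul_diagonal]
    _ = (M * Matrix.diagonal f) * (V * Matrix.diagonal q)ᵀ := by
        rw [Matrix.transpose_mul, Matrix.diagonal_transpose]; simp only [Matrix.mul_assoc]
  · -- Frobenius of A
    rw [hnn]
    apply Finset.sum_congr rfl
    intro k _
    have : ∀ i, ((M * Matrix.diagonal f) i k)^2 = (M i k)^2 * (f k)^2 := by
      intro i; rw [Matrix.mul_diagonal]; ring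
    rw [Finset.sum_congr rfl fun i _ => this i, ← Finset.sum_mul, hcol k]
    by_cases h : ε k = 0
    · simp [h, hf]
    · have hpos : 0 < ε k := lt_of_le_of_ne (hεnn k) (Ne.symm h)
      have hsp : 0 < Real.sqrt (ε k) := Real.sqrt_pos.mpr hpos
      have h2 : (Real.sqrt (Real.sqrt (ε k)))^2 = Real.sqrt (ε k) :=
        Real.sq_sqrt (Real.sqrt_nonneg _)
      simp only [hf, if_neg h]
      rw [inv_pow, h2]
      rw [← Real.sqrt_mul_self hpos.le]
      field_simp
      rw [Real.sq_sqrt (Real.sqrt_nonneg _)]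
  · -- Frobenius of B
    rw [hnn]
    apply Finset.sum_congr rfl
    intro k _
    have : ∀ i, ((V * Matrix.diagonal q) i k)^2 = (V i k)^2 * (q k)^2 := by
      intro i; rw [Matrix.mul_diagonal]; ring
    rw [Finset.sum_congr rfl fun i _ => this i, ← Finset.sum_mul]
    have hcolV : (∑ i, (V i k)^2) = 1 := by
      have h1 : (Vᵀ * V) k k = (1 : Matrix (Fin n) (Fin n) ℝ) k k := by rw [hV1]
      simpa [Matrix.mul_apply, Matrix.transpose_apply, pow_two] using h1
    rw [hcolV, one_mul, hq]
    exact Real.sq_sqrt (Real.sqrt_nonneg _)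
  · -- IsContr C
    have hCC : (M * Matrix.diagonal g * Vᵀ)ᵀ * (M * Matrix.diagonal g * Vᵀ)
        = V * Matrix.diagonal (fun j => if ε j = 0 then 0 else 1) * Vᵀ := by
      have h1 : (M * Matrix.diagonal g * Vᵀ)ᵀ = V * Matrix.diagonal g * Mᵀ := by
        simp [Matrix.transpose_mul, Matrix.diagonal_transpose, Matrix.mul_assoc]
      rw [h1]
      calc V * Matrix.diagonal g * Mᵀ * (M * Matrix.diagonal g * Vᵀ)
          = V * (Matrix.diagonal g * (Mᵀ * M) * Matrix.diagonal g) * Vᵀ := by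
            simp only [Matrix.mul_assoc]
        _ = V * (Matrix.diagonal g * Matrix.diagonal ε * Matrix.diagonal g) * Vᵀ := by rw [hMM]
        _ = V * Matrix.diagonal (fun j => g j * ε j * g j) * Vᵀ := by
            rw [Matrix.diagonal_mul_diagonal, Matrix.diagonal_mul_diagonal]
        _ = V * Matrix.diagonal (fun j => if ε j = 0 then 0 else 1) * Vᵀ := by
            have harg : (fun j => g j * ε j * g j) = (fun j => if ε j = 0 then (0:ℝ) else 1) := by
              funext j
              by_cases h : ε j = 0
              · simp [hg, h]
              · have hpos : 0 < ε j := lt_of_le_of_ne (hεnn j) (Ne.symm h)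
                have hsp : 0 < Real.sqrt (ε j) := Real.sqrt_pos.mpr hpos
                have hss : Real.sqrt (ε j) * Real.sqrt (ε j) = ε j := Real.mul_self_sqrt hpos.le
                simp only [hg, if_neg h]
                rw [← hss]
                field_simp
                rw [Real.sqrt_sq hsp.le]
            rw [harg]
    intro x
    rw [dot_self_mulVec, hCC]
    set y : Fin n → ℝ := Vᵀ *ᵥ x with hy
    have h2 : (V * Matrix.diagonal (fun j => if ε j = 0 then 0 else 1) * Vᵀ) *ᵥ x
        = V *ᵥ (Matrix.diagonal (fun j => if ε j = 0 then 0 else 1) *ᵥ y) := by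
      rw [hy, Matrix.mulVec_mulVec, Matrix.mulVec_mulVec]
    rw [h2, Matrix.dotProduct_mulVec, vecMul_eq, ← hy]
    have h3 : y ⬝ᵥ (Matrix.diagonal (fun j => if ε j = 0 then 0 else 1) *ᵥ y)
        ≤ y ⬝ᵥ y := by
      unfold dotProduct
      apply Finset.sum_le_sum
      intro j _
      rw [Matrix.mulVec_diagonal]
      by_cases h : ε j = 0
      · simp [h]; nlinarith [sq_nonneg (y j)]
      · simp [h]
    refine h3.trans ?_
    have h4 : y ⬝ᵥ y = x ⬝ᵥ x := by
      rw [hy, dot_self_mulVec, Matrix.transpose_transpose, hV2]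
      simp
    exact le_of_eq h4
  · -- trace
    have hCW : (M * Matrix.diagonal g * Vᵀ)ᵀ * W
        = V * Matrix.diagonal (fun j => g j * ε j) * Vᵀ := by
      have h1 : (M * Matrix.diagonal g * Vᵀ)ᵀ = V * Matrix.diagonal g * Mᵀ := by
        simp [Matrix.transpose_mul, Matrix.diagonal_transpose, Matrix.mul_assoc]
      rw [h1]
      have h2 : Mᵀ * W = Matrix.diagonal ε * Vᵀ := by
        calc Mᵀ * W = Vᵀ * (Wᵀ * W) := by rw [hM, Matrix.transpose_mul, Matrix.mul_assoc]
        _ = (Vᵀ * V) * Matrix.diagonal ε * Vᵀ := by rw [hWW]; simp only [Matrix.mul_assoc]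
        _ = Matrix.diagonal ε * Vᵀ := by rw [hV1, Matrix.one_mul]
      calc V * Matrix.diagonal g * Mᵀ * W = V * Matrix.diagonal g * (Mᵀ * W) := by
            rw [Matrix.mul_assoc]
        _ = V * (Matrix.diagonal g * Matrix.diagonal ε) * Vᵀ := by
            rw [h2]; simp only [Matrix.mul_assoc]
        _ = V * Matrix.diagonal (fun j => g j * ε j) * Vᵀ := by
            rw [Matrix.diagonal_mul_diagonal]
    rw [hCW, Matrix.trace_mul_cycle, hV1, Matrix.one_mul, Matrix.trace_diagonal, hnn]
    apply Finset.sum_congr rfl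
    intro j _
    by_cases h : ε j = 0
    · simp [hg, h]
    · have hpos : 0 < ε j := lt_of_le_of_ne (hεnn j) (Ne.symm h)
      have hsp : 0 < Real.sqrt (ε j) := Real.sqrt_pos.mpr hpos
      have hss : Real.sqrt (ε j) * Real.sqrt (ε j) = ε j := Real.mul_self_sqrt hpos.le
      simp only [hg, if_neg h]
      rw [← hss]
      field_simp
      rw [Real.sqrt_sq hsp.le]

lemma trace_le_nn {m n : ℕ} (W C : Matrix (Fin m) (Fin n) ℝ) (hC : IsContr C) :
    Matrix.trace (Cᵀ * W) ≤ nuclearNorm W := by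
  obtain ⟨A, B, _, hAB, hA, hB, _, _⟩ := nn_fact W
  have hW : Matrix.trace (Cᵀ * W) = ∑ k, (C *ᵥ (fun j => B j k)) ⬝ᵥ (fun i => A i k) := by
    rw [trace_transpose_mul, hAB]
    simp only [Matrix.mul_apply, Matrix.transpose_apply, dotProduct, Matrix.mulVec]
    calc ∑ i, ∑ j, C i j * ∑ k, A i k * B j k
        = ∑ i, ∑ j, ∑ k, C i j * (A i k * B j k) := by
          refine Finset.sum_congr rfl fun i _ => Finset.sum_congr rfl fun j _ => ?_
          rw [Finset.mul_sum]
      _ = ∑ i, ∑ k, ∑ j, C i j * (A i k * B j k) := by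
          refine Finset.sum_congr rfl fun i _ => ?_
          exact Finset.sum_comm
      _ = ∑ k, ∑ i, ∑ j, C i j * (A i k * B j k) := Finset.sum_comm
      _ = ∑ k, ∑ i, (∑ j, C i j * B j k) * A i k := by
          refine Finset.sum_congr rfl fun k _ => Finset.sum_congr rfl fun i _ => ?_
          rw [Finset.sum_mul]
          exact Finset.sum_congr rfl fun j _ => by ring
  rw [hW]
  have step1 : ∀ k : Fin n, (C *ᵥ (fun j => B j k)) ⬝ᵥ (fun i => A i k)
      ≤ Real.sqrt (∑ j, (B j k)^2) * Real.sqrt (∑ i, (A i k)^2) := by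
    intro k
    have cs : (C *ᵥ (fun j => B j k)) ⬝ᵥ (fun i => A i k)
        ≤ Real.sqrt (∑ i, ((C *ᵥ (fun j => B j k)) i)^2) * Real.sqrt (∑ i, (A i k)^2) := by
      exact Real.sum_mul_le_sqrt_mul_sqrt univ _ _
    refine cs.trans ?_
    apply mul_le_mul_of_nonneg_right _ (Real.sqrt_nonneg _)
    apply Real.sqrt_le_sqrt
    have := hC (fun j => B j k)
    simp only [dotProduct] at this
    calc ∑ i, ((C *ᵥ (fun j => B j k)) i)^2
        = ∑ i, ((C *ᵥ (fun j => B j k)) i) * ((C *ᵥ (fun j => B j k)) i) := by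
          exact Finset.sum_congr rfl fun i _ => sq (((C *ᵥ (fun j => B j k)) i)) ▸ by ring
      _ ≤ ∑ j, (B j k) * (B j k) := this
      _ = ∑ j, (B j k)^2 := Finset.sum_congr rfl fun j _ => by ring
  calc ∑ k, (C *ᵥ (fun j => B j k)) ⬝ᵥ (fun i => A i k)
      ≤ ∑ k, Real.sqrt (∑ j, (B j k)^2) * Real.sqrt (∑ i, (A i k)^2) :=
        Finset.sum_le_sum fun k _ => step1 k
    _ ≤ Real.sqrt (∑ k, (∑ j, (B j k)^2)) * Real.sqrt (∑ k, (∑ i, (A i k)^2)) :=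
        Real.sum_sqrt_mul_sqrt_le univ (fun k => Finset.sum_nonneg fun _ _ => sq_nonneg _)
          (fun k => Finset.sum_nonneg fun _ _ => sq_nonneg _)
    _ = nuclearNorm W := by
        rw [hA, hB, Real.mul_self_sqrt (nn_nonneg W)]

lemma nn_conj_le {m n : ℕ} (W : Matrix (Fin m) (Fin n) ℝ)
    (L : Matrix (Fin m) (Fin m) ℝ) (R : Matrix (Fin n) (Fin n) ℝ)
    (hL : L * Lᵀ = 1) (hR : Rᵀ * R = 1) :
    nuclearNorm (L * W * Rᵀ) ≤ nuclearNorm W := by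
  obtain ⟨_, _, C, _, _, _, hC, hCtr⟩ := nn_fact (L * W * Rᵀ)
  have hC' : IsContr (Lᵀ * C * R) := by
    intro x
    have e1 : (Lᵀ * C * R) *ᵥ x = Lᵀ *ᵥ (C *ᵥ (R *ᵥ x)) := by
      rw [Matrix.mulVec_mulVec, Matrix.mulVec_mulVec]
    rw [e1, dot_self_mulVec, Matrix.transpose_transpose, hL]
    rw [Matrix.one_mulVec]
    calc (C *ᵥ (R *ᵥ x)) ⬝ᵥ (C *ᵥ (R *ᵥ x)) ≤ (R *ᵥ x) ⬝ᵥ (R *ᵥ x) := hC _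
      _ = x ⬝ᵥ ((Rᵀ * R) *ᵥ x) := dot_self_mulVec R x
      _ = x ⬝ᵥ x := by rw [hR, Matrix.one_mulVec]
  have htr : Matrix.trace ((Lᵀ * C * R)ᵀ * W) = Matrix.trace (Cᵀ * (L * W * Rᵀ)) := by
    have e2 : (Lᵀ * C * R)ᵀ = Rᵀ * Cᵀ * L := by
      rw [Matrix.transpose_mul, Matrix.transpose_mul, Matrix.transpose_transpose,
        Matrix.mul_assoc]
    rw [e2]
    calc Matrix.trace (Rᵀ * Cᵀ * L * W) = Matrix.trace (Rᵀ * (Cᵀ * L * W)) := by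
          simp only [Matrix.mul_assoc]
      _ = Matrix.trace (Cᵀ * L * W * Rᵀ) := by rw [Matrix.trace_mul_comm]
      _ = Matrix.trace (Cᵀ * (L * W * Rᵀ)) := by simp only [Matrix.mul_assoc]
  calc nuclearNorm (L * W * Rᵀ) = Matrix.trace (Cᵀ * (L * W * Rᵀ)) := hCtr.symm
    _ = Matrix.trace ((Lᵀ * C * R)ᵀ * W) := htr.symm
    _ ≤ nuclearNorm W := trace_le_nn W _ hC'

lemma nn_conj_eq {m n : ℕ} (W : Matrix (Fin m) (Fin n) ℝ)
    (L : Matrix (Fin m) (Fin m) ℝ) (R : Matrix (Fin n) (Fin n) ℝ)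
    (hL : Lᵀ * L = 1) (hR : Rᵀ * R = 1) :
    nuclearNorm (L * W * Rᵀ) = nuclearNorm W := by
  have hL2 : L * Lᵀ = 1 := mul_eq_one_comm.mp hL
  have hR2 : R * Rᵀ = 1 := mul_eq_one_comm.mp hR
  refine le_antisymm (nn_conj_le W L R hL2 hR) ?_
  have e : Lᵀ * (L * W * Rᵀ) * Rᵀᵀ = W := by
    rw [Matrix.transpose_transpose]
    calc Lᵀ * (L * W * Rᵀ) * R = (Lᵀ * L) * W * (Rᵀ * R) := by simp only [Matrix.mul_assoc]
      _ = W := by rw [hL, hR, Matrix.one_mul, Matrix.mul_one]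
  have := nn_conj_le (L * W * Rᵀ) Lᵀ Rᵀ (by rw [Matrix.transpose_transpose, hL])
    (by rw [Matrix.transpose_transpose, hR2])
  rwa [e] at this

lemma nn_combo {m n : ℕ} (Y Z : Matrix (Fin m) (Fin n) ℝ) (a b : ℝ)
    (ha : 0 ≤ a) (hb : 0 ≤ b) :
    nuclearNorm (a • Y + b • Z) ≤ a * nuclearNorm Y + b * nuclearNorm Z := by
  obtain ⟨_, _, C, _, _, _, hC, hCtr⟩ := nn_fact (a • Y + b • Z)
  rw [← hCtr, Matrix.mul_add, Matrix.mul_smul, Matrix.mul_smul, Matrix.trace_add,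
    Matrix.trace_smul, Matrix.trace_smul]
  have h1 := trace_le_nn Y C hC
  have h2 := trace_le_nn Z C hC
  simp only [smul_eq_mul]
  exact add_le_add (mul_le_mul_of_nonneg_left h1 ha) (mul_le_mul_of_nonneg_left h2 hb)

lemma isContr_entry_le {m n : ℕ} {C : Matrix (Fin m) (Fin n) ℝ} (hC : IsContr C)
    (i : Fin m) (j : Fin n) : (C i j)^2 ≤ 1 := by
  have h := hC (Pi.single j 1)
  have h1 : C *ᵥ Pi.single j 1 = fun i => C i j := by
    funext i'
    rw [Matrix.mulVec_single]
    exact mul_one _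
  rw [h1] at h
  have h2 : (Pi.single j 1 : Fin n → ℝ) ⬝ᵥ Pi.single j 1 = 1 := by
    simp [dotProduct, Pi.single_apply]
  rw [h2] at h
  simp only [dotProduct] at h
  have h3 : (C i j) * (C i j) ≤ ∑ i', (fun i => C i j) i' * (fun i => C i j) i' := by
    apply Finset.single_le_sum (f := fun i' => C i' j * C i' j) (fun i' _ => mul_self_nonneg _)
      (mem_univ i)
  calc (C i j)^2 = C i j * C i j := sq (C i j) ▸ by ring
    _ ≤ 1 := h3.trans h

lemma isContr_diaglike {m n : ℕ} (C : Matrix (Fin m) (Fin n) ℝ)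
    (hdiag : ∀ (i : Fin m) (j : Fin n), (i : ℕ) ≠ (j : ℕ) → C i j = 0)
    (hbd : ∀ i j, (C i j)^2 ≤ 1) :
    IsContr C := by
  intro x
  set X : ℕ → ℝ := fun i => if h : i < n then (x ⟨i, h⟩)^2 else 0 with hX
  have hmv : ∀ i : Fin m, (C *ᵥ x) i = if h : (i : ℕ) < n then C i ⟨i, h⟩ * x ⟨i, h⟩ else 0 := by
    intro i
    rw [Matrix.mulVec]
    exact sum_delta i.1 (fun j => C i j * x j)
      (fun j hj => by show C i j * x j = 0; rw [hdiag i j (fun e => hj e.symm), zero_mul])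
  have key : ∀ i : Fin m, (C *ᵥ x) i * (C *ᵥ x) i ≤ X i.1 := by
    intro i
    rw [hmv i, hX]
    by_cases h : (i : ℕ) < n
    · rw [dif_pos h]
      simp only [dif_pos h]
      have := hbd i ⟨i.1, h⟩
      nlinarith [sq_nonneg (x ⟨i.1, h⟩), sq_nonneg (C i ⟨i.1, h⟩ * x ⟨i.1, h⟩)]
    · rw [dif_neg h]; simp only [dif_neg h]; simp
  calc (C *ᵥ x) ⬝ᵥ (C *ᵥ x) = ∑ i, (C *ᵥ x) i * (C *ᵥ x) i := rfl
    _ ≤ ∑ i : Fin m, X i.1 := Finset.sum_le_sum fun i _ => key i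
    _ = ∑ i ∈ range m, X i := sum_fin_val X
    _ = ∑ i ∈ range (min m n), X i := sum_range_min X
        (fun i hi => by rw [hX]; simp [Nat.not_lt.mpr hi])
    _ ≤ ∑ i ∈ range n, X i := Finset.sum_le_sum_of_subset_of_nonneg
        (Finset.range_subset_range.mpr (min_le_right m n))
        (fun i _ _ => by simp only [hX]; split <;> simp [sq_nonneg])
    _ = ∑ j : Fin n, X j.1 := (sum_fin_val X).symm
    _ = x ⬝ᵥ x := by
        apply Finset.sum_congr rfl
        intro j _
        rw [hX]
        simp only [dif_pos j.2]
        rw [show (⟨j.1, j.2⟩ : Fin n) = j from Fin.ext rfl]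
        exact sq (x j) ▸ by ring

/-- lower bound: sum of positive parts of diagonal entries is at most the nuclear norm -/
lemma diag_le_nn {m n : ℕ} (W : Matrix (Fin m) (Fin n) ℝ) (s : ℕ → ℝ)
    (hs : ∀ i (h1 : i < m) (h2 : i < n), s i = max (W ⟨i, h1⟩ ⟨i, h2⟩) 0)
    (hs0 : ∀ i, ¬(i < m ∧ i < n) → s i = 0) :
    ∑ i ∈ range (min m n), s i ≤ nuclearNorm W := by
  classical
  set C : Matrix (Fin m) (Fin n) ℝ :=
    fun i j => if (i : ℕ) = (j : ℕ) ∧ 0 < W i j then 1 else 0 with hC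
  have hcontr : IsContr C := by
    apply isContr_diaglike
    · intro i j hij
      simp only [hC]
      rw [if_neg (fun h => hij h.1)]
    · intro i j
      simp only [hC]
      split <;> norm_num
  have htr : Matrix.trace (Cᵀ * W) = ∑ i ∈ range (min m n), s i := by
    rw [trace_transpose_mul]
    have hrow : ∀ i : Fin m, (∑ j, C i j * W i j) = s i.1 := by
      intro i
      rw [sum_delta i.1 (fun j => C i j * W i j) (fun j hj => by
        show C i j * W i j = 0
        simp only [hC]
        rw [if_neg (fun h => hj (h.1.symm)), zero_mul])]
      by_cases h : (i : ℕ) < n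
      · rw [dif_pos h, hs i.1 i.2 h, Fin.eta]
        by_cases hw : 0 < W i ⟨i.1, h⟩
        · simp only [hC, eq_self_iff_true, true_and]
          rw [if_pos hw, one_mul, max_eq_left hw.le]
        · simp only [hC, eq_self_iff_true, true_and]
          rw [if_neg hw, zero_mul, max_eq_right (le_of_not_gt hw)]
      · rw [dif_neg h, hs0 i.1 (fun hcon => h hcon.2)]
    calc ∑ i : Fin m, ∑ j, C i j * W i j = ∑ i : Fin m, s i.1 :=
          Finset.sum_congr rfl fun i _ => hrow i
      _ = ∑ i ∈ range m, s i := sum_fin_val s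
      _ = ∑ i ∈ range (min m n), s i := sum_range_min s
          (fun i hi => hs0 i (fun hcon => by omega))
  rw [← htr]
  exact trace_le_nn W C hcontr

lemma nn_diag_eq {m n : ℕ} (t : ℕ → ℝ) (ht : ∀ i, i < min m n → 0 ≤ t i)
    (D : Matrix (Fin m) (Fin n) ℝ) (hD : ∀ i j, D i j = if (i : ℕ) = (j : ℕ) then t i.1 else 0) :
    nuclearNorm D = ∑ i ∈ range (min m n), t i := by
  classical
  refine le_antisymm ?_ ?_
  · obtain ⟨_, _, C, _, _, _, hC, hCtr⟩ := nn_fact D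
    rw [← hCtr, trace_transpose_mul, Finset.sum_comm]
    have hcol : ∀ j : Fin n, (∑ i, C i j * D i j)
        = if h : (j : ℕ) < m then C ⟨j.1, h⟩ j * t j.1 else 0 := by
      intro j
      rw [sum_delta j.1 (fun i => C i j * D i j) (fun i hi => by
        show C i j * D i j = 0
        rw [hD, if_neg hi, mul_zero])]
      by_cases h : (j : ℕ) < m
      · rw [dif_pos h, dif_pos h, hD, if_pos rfl]
      · rw [dif_neg h, dif_neg h]
    calc ∑ j : Fin n, ∑ i, C i j * D i j
        = ∑ j : Fin n, (if h : (j : ℕ) < m then C ⟨j.1, h⟩ j * t j.1 else 0) :=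
          Finset.sum_congr rfl fun j _ => hcol j
      _ ≤ ∑ j : Fin n, (if (j : ℕ) < m then t j.1 else 0) := by
          apply Finset.sum_le_sum
          intro j _
          by_cases h : (j : ℕ) < m
          · rw [dif_pos h, if_pos h]
            have h1 := isContr_entry_le hC ⟨j.1, h⟩ j
            have h2 : 0 ≤ t j.1 := ht j.1 (by omega)
            have h3 : C ⟨j.1, h⟩ j ≤ 1 := by nlinarith [sq_nonneg (C ⟨j.1, h⟩ j - 1)]
            exact mul_le_of_le_one_left h2 h3
          · rw [dif_neg h, if_neg h]
      _ = ∑ i ∈ range (min m n), t i := sum_fin_ite t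
  · have h := diag_le_nn D (fun i => if i < m ∧ i < n then t i else 0) ?_ ?_
    · calc ∑ i ∈ range (min m n), t i
          = ∑ i ∈ range (min m n), (if i < m ∧ i < n then t i else 0) := by
            apply Finset.sum_congr rfl
            intro i hi
            simp only [mem_range, Nat.lt_min] at hi
            rw [if_pos hi]
        _ ≤ nuclearNorm D := h
    · intro i h1 h2
      rw [if_pos ⟨h1, h2⟩, hD, if_pos rfl]
      exact (max_eq_left (ht i (by omega))).symm
    · intro i hcon
      rw [if_neg hcon]

lemma frob_eq_trace {m n : ℕ} (M : Matrix (Fin m) (Fin n) ℝ) :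
    ∑ i, ∑ j, (M i j)^2 = Matrix.trace (Mᵀ * M) := by
  rw [trace_transpose_mul]
  exact Finset.sum_congr rfl fun i _ => Finset.sum_congr rfl fun j _ => by ring

lemma frob_conj {m n : ℕ} (A : Matrix (Fin m) (Fin n) ℝ)
    (L : Matrix (Fin m) (Fin m) ℝ) (R : Matrix (Fin n) (Fin n) ℝ)
    (hL : Lᵀ * L = 1) (hR : Rᵀ * R = 1) :
    ∑ i, ∑ j, ((L * A * Rᵀ) i j)^2 = ∑ i, ∑ j, (A i j)^2 := by
  rw [frob_eq_trace, frob_eq_trace]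
  have e1 : (L * A * Rᵀ)ᵀ = R * Aᵀ * Lᵀ := by
    rw [Matrix.transpose_mul, Matrix.transpose_mul, Matrix.transpose_transpose,
      Matrix.mul_assoc]
  rw [e1]
  have e2 : R * Aᵀ * Lᵀ * (L * A * Rᵀ) = R * (Aᵀ * A) * Rᵀ := by
    calc R * Aᵀ * Lᵀ * (L * A * Rᵀ) = R * (Aᵀ * ((Lᵀ * L) * A)) * Rᵀ := by
          simp only [Matrix.mul_assoc]
      _ = R * (Aᵀ * A) * Rᵀ := by rw [hL, Matrix.one_mul]
  rw [e2, Matrix.trace_mul_cycle, ← Matrix.mul_assoc, hR, Matrix.one_mul]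

lemma frob_diag_pattern {m n : ℕ} (f : ℕ → ℝ) (D : Matrix (Fin m) (Fin n) ℝ)
    (hD : ∀ i j, D i j = if (i : ℕ) = (j : ℕ) then f i.1 else 0) :
    ∑ i, ∑ j, (D i j)^2 = ∑ i ∈ range (min m n), (f i)^2 := by
  have hrow : ∀ i : Fin m, (∑ j, (D i j)^2) = if (i : ℕ) < n then (f i.1)^2 else 0 := by
    intro i
    rw [sum_delta i.1 (fun j => (D i j)^2) (fun j hj => by
      show (D i j)^2 = 0
      rw [hD, if_neg (fun e => hj e.symm)]
      norm_num)]
    by_cases h : (i : ℕ) < n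
    · rw [dif_pos h, if_pos h, hD, if_pos rfl]
    · rw [dif_neg h, if_neg h]
  calc ∑ i, ∑ j, (D i j)^2 = ∑ i : Fin m, (if (i : ℕ) < n then (f i.1)^2 else 0) :=
        Finset.sum_congr rfl fun i _ => hrow i
    _ = ∑ i ∈ range (min n m), (f i)^2 := sum_fin_ite (fun i => (f i)^2)
    _ = ∑ i ∈ range (min m n), (f i)^2 := by rw [min_comm]

lemma diag_sq_le_frob {m n : ℕ} (F : Fin m → Fin n → ℝ) (hF : ∀ i j, 0 ≤ F i j)
    (g : ℕ → ℝ) (hg : ∀ i (h1 : i < m) (h2 : i < n), g i ≤ F ⟨i, h1⟩ ⟨i, h2⟩) :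
    ∑ i ∈ range (min m n), g i ≤ ∑ i, ∑ j, F i j := by
  set G : ℕ → ℝ := fun i => if h : i < m ∧ i < n then F ⟨i, h.1⟩ ⟨i, h.2⟩ else 0 with hG
  have step1 : ∑ i ∈ range (min m n), g i ≤ ∑ i ∈ range (min m n), G i := by
    apply Finset.sum_le_sum
    intro i hi
    simp only [mem_range, Nat.lt_min] at hi
    simp only [hG, dif_pos hi]
    exact hg i hi.1 hi.2
  have step2 : ∑ i ∈ range (min m n), G i = ∑ i : Fin m, (if (i : ℕ) < n then G i.1 else 0) := by
    rw [sum_fin_ite G, min_comm]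
  have step3 : ∀ i : Fin m, (if (i : ℕ) < n then G i.1 else 0) ≤ ∑ j, F i j := by
    intro i
    by_cases h : (i : ℕ) < n
    · rw [if_pos h]
      have hmn : (i : ℕ) < m ∧ (i : ℕ) < n := ⟨i.2, h⟩
      simp only [hG]
      rw [dif_pos hmn]
      calc F ⟨i.1, hmn.1⟩ ⟨i.1, hmn.2⟩ = F i ⟨i.1, h⟩ := by rw [Fin.eta]
        _ ≤ ∑ j, F i j := Finset.single_le_sum (fun j _ => hF i j) (mem_univ _)
    · rw [if_neg h]
      exact Finset.sum_nonneg fun j _ => hF i j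
  calc ∑ i ∈ range (min m n), g i ≤ ∑ i ∈ range (min m n), G i := step1
    _ = ∑ i : Fin m, (if (i : ℕ) < n then G i.1 else 0) := step2
    _ ≤ ∑ i, ∑ j, F i j := Finset.sum_le_sum fun i _ => step3 i

lemma sigma_le_mu {K : ℕ} (lam : ℝ) (hlam : 0 < lam) (σ : ℕ → ℝ)
    (σbar : ℕ → ℝ) (hσbar : ∀ k : ℕ, σbar k = (∑ i ∈ range k, σ i) / k)
    (d : ℕ) (hd1 : 1 ≤ d)
    (hmax : ∀ e : ℕ, d < e → e ≤ K → ¬ (lam * e / (1 + lam * e) * σbar e < σ (e - 1)))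
    (μ : ℝ) (hμ : μ = lam * d / (1 + lam * d) * σbar d) :
    ∀ i, d ≤ i → i < K → σ i ≤ μ := by
  have hdpos : (0:ℝ) < d := by exact_mod_cast hd1
  have hden : (0:ℝ) < 1 + lam * d := by positivity
  set P : ℝ := ∑ i ∈ range d, σ i with hP
  have hμP : μ * (1 + lam * d) = lam * P := by
    rw [hμ, hσbar]
    field_simp
    ring
  intro i
  induction i using Nat.strong_induction_on with
  | _ i IH =>
    intro hdi hiK
    have he := hmax (i+1) (by omega) (by omega)
    push_neg at he
    have hei : (i+1) - 1 = i := by omega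
    rw [hei, hσbar] at he
    set Q : ℝ := ∑ j ∈ range (i+1), σ j with hQ
    set c : ℝ := ((i+1 : ℕ) : ℝ) with hc
    have hcpos : (0:ℝ) < c := by rw [hc]; positivity
    have heden : (0:ℝ) < 1 + lam * c := by positivity
    have hrw : lam * c / (1 + lam * c) * (Q / c) = lam * Q / (1 + lam * c) := by
      field_simp
    have h2 : σ i * (1 + lam * c) ≤ lam * Q := by
      have := he
      rw [hrw] at this
      exact (le_div_iff₀ heden).mp this
    have hsplit : Q = P + ∑ j ∈ Ico d (i+1), σ j := by
      rw [hQ, hP, Finset.range_eq_Ico, ← Finset.sum_Ico_consecutive σ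
        (Nat.zero_le d) (by omega : d ≤ i+1), Finset.range_eq_Ico]
    have hIco : ∑ j ∈ Ico d (i+1), σ j ≤ ((i:ℝ) - (d:ℝ)) * μ + σ i := by
      rw [Finset.sum_Ico_succ_top hdi]
      have h1 : ∑ j ∈ Ico d i, σ j ≤ ((i:ℝ) - (d:ℝ)) * μ := by
        calc ∑ j ∈ Ico d i, σ j ≤ ∑ _j ∈ Ico d i, μ := by
              apply Finset.sum_le_sum
              intro j hj
              simp only [mem_Ico] at hj
              exact IH j hj.2 hj.1 (by omega)
          _ = ((i:ℝ) - (d:ℝ)) * μ := by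
              rw [Finset.sum_const, Nat.card_Ico, nsmul_eq_mul]
              congr 1
              rw [Nat.cast_sub hdi]
      linarith
    have h3 : lam * Q ≤ lam * (P + (((i:ℝ) - (d:ℝ)) * μ + σ i)) := by
      apply mul_le_mul_of_nonneg_left _ hlam.le
      rw [hsplit]
      linarith
    have hcc : c = (i:ℝ) + 1 := by rw [hc]; push_cast; ring
    have hipos : (0:ℝ) < 1 + lam * (i:ℝ) := by positivity
    have h2' : σ i * (1 + lam * ((i:ℝ) + 1)) ≤ lam * Q := by rw [← hcc]; exact h2
    have h4 : σ i * (1 + lam * (i:ℝ)) ≤ μ * (1 + lam * (i:ℝ)) := by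
      nlinarith [hμP, h2', h3]
    nlinarith [h4, hipos]

lemma vec_min (K : ℕ) (lam : ℝ) (hlam : 0 < lam) (σ t : ℕ → ℝ) (μ : ℝ)
    (hT : lam * (∑ i ∈ range K, t i) = μ)
    (hcases : ∀ i ∈ range K, t i - σ i + μ = 0 ∨ (t i = 0 ∧ σ i ≤ μ))
    (s : ℕ → ℝ) (hs : ∀ i ∈ range K, 0 ≤ s i) :
    ∑ i ∈ range K, (σ i - t i)^2 + lam * (∑ i ∈ range K, t i)^2 ≤
      ∑ i ∈ range K, (σ i - s i)^2 + lam * (∑ i ∈ range K, s i)^2 := by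
  set T : ℝ := ∑ i ∈ range K, t i with hTs
  set Sm : ℝ := ∑ i ∈ range K, s i with hSm
  have hexp : ∑ i ∈ range K, (σ i - s i)^2
      = ∑ i ∈ range K, (σ i - t i)^2 + ∑ i ∈ range K, (s i - t i)^2
        + 2 * (∑ i ∈ range K, (s i - t i) * (t i - σ i + μ)) - 2 * μ * (Sm - T) := by
    rw [hSm, hTs, ← Finset.sum_sub_distrib, Finset.mul_sum, Finset.mul_sum,
      ← Finset.sum_add_distrib, ← Finset.sum_add_distrib, ← Finset.sum_sub_distrib]
    apply Finset.sum_congr rfl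
    intro i _
    ring
  have hcross : 0 ≤ ∑ i ∈ range K, (s i - t i) * (t i - σ i + μ) := by
    apply Finset.sum_nonneg
    intro i hi
    rcases hcases i hi with h | ⟨h1, h2⟩
    · rw [h, mul_zero]
    · rw [h1]
      have := hs i hi
      nlinarith
  have hsq : 0 ≤ ∑ i ∈ range K, (s i - t i)^2 := Finset.sum_nonneg fun i _ => sq_nonneg _
  have e1 : μ * Sm = lam * T * Sm := by rw [← hT]
  have e2 : μ * T = lam * T * T := by rw [← hT]
  nlinarith [hsq, hcross, mul_nonneg hlam.le (sq_nonneg (Sm - T)), e1, e2]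

lemma uniq {m n : ℕ} (lam : ℝ) (hlam : 0 < lam) (X Y : Matrix (Fin m) (Fin n) ℝ)
    (part1 : ∀ Z : Matrix (Fin m) (Fin n) ℝ,
      (∑ i, ∑ j, ((X - Y) i j) ^ 2) + lam * (nuclearNorm Y) ^ 2 ≤
        (∑ i, ∑ j, ((X - Z) i j) ^ 2) + lam * (nuclearNorm Z) ^ 2) :
    ∀ Z : Matrix (Fin m) (Fin n) ℝ,
      (∀ W : Matrix (Fin m) (Fin n) ℝ,
          (∑ i, ∑ j, ((X - Z) i j) ^ 2) + lam * (nuclearNorm Z) ^ 2 ≤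
            (∑ i, ∑ j, ((X - W) i j) ^ 2) + lam * (nuclearNorm W) ^ 2) →
        Z = Y := by
  intro Z hZmin
  have h1 := hZmin Y
  have h2 := part1 Z
  have heq : (∑ i, ∑ j, ((X - Z) i j) ^ 2) + lam * (nuclearNorm Z) ^ 2
      = (∑ i, ∑ j, ((X - Y) i j) ^ 2) + lam * (nuclearNorm Y) ^ 2 := le_antisymm h1 h2
  have h3 := part1 ((2⁻¹ : ℝ) • (Y + Z))
  have hnnM : nuclearNorm ((2⁻¹ : ℝ) • (Y + Z)) ≤ 2⁻¹ * nuclearNorm Y + 2⁻¹ * nuclearNorm Z := by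
    have := nn_combo Y Z 2⁻¹ 2⁻¹ (by norm_num) (by norm_num)
    rw [smul_add]
    exact this
  have hnnM2 : lam * (nuclearNorm ((2⁻¹ : ℝ) • (Y + Z)))^2
      ≤ lam * ((nuclearNorm Y)^2 / 2 + (nuclearNorm Z)^2 / 2) := by
    apply mul_le_mul_of_nonneg_left _ hlam.le
    nlinarith [nn_nonneg ((2⁻¹ : ℝ) • (Y + Z)), nn_nonneg Y, nn_nonneg Z, hnnM,
      sq_nonneg (nuclearNorm Y - nuclearNorm Z)]
  have hfrobM : ∑ i, ∑ j, ((X - (2⁻¹ : ℝ) • (Y + Z)) i j)^2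
      = (∑ i, ∑ j, ((X - Y) i j)^2) / 2 + (∑ i, ∑ j, ((X - Z) i j)^2) / 2
        - (∑ i, ∑ j, ((Y - Z) i j)^2) / 4 := by
    have hentry : ∀ (i : Fin m) (j : Fin n), ((X - (2⁻¹ : ℝ) • (Y + Z)) i j)^2
        = ((X - Y) i j)^2 / 2 + ((X - Z) i j)^2 / 2 - ((Y - Z) i j)^2 / 4 := by
      intro i j
      simp only [Matrix.sub_apply, Matrix.add_apply, Matrix.smul_apply, smul_eq_mul]
      ring
    calc ∑ i, ∑ j, ((X - (2⁻¹ : ℝ) • (Y + Z)) i j)^2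
        = ∑ i, ∑ j, (((X - Y) i j)^2 / 2 + ((X - Z) i j)^2 / 2 - ((Y - Z) i j)^2 / 4) :=
          Finset.sum_congr rfl fun i _ => Finset.sum_congr rfl fun j _ => hentry i j
      _ = (∑ i, ∑ j, ((X - Y) i j)^2) / 2 + (∑ i, ∑ j, ((X - Z) i j)^2) / 2
          - (∑ i, ∑ j, ((Y - Z) i j)^2) / 4 := by
          simp only [Finset.sum_add_distrib, Finset.sum_sub_distrib, ← Finset.sum_div]
  have hYZ : ∑ i, ∑ j, ((Y - Z) i j)^2 ≤ 0 := by linarith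
  have hYZnn : 0 ≤ ∑ i, ∑ j, ((Y - Z) i j)^2 :=
    Finset.sum_nonneg fun i _ => Finset.sum_nonneg fun j _ => sq_nonneg _
  have hYZ0 : ∑ i, ∑ j, ((Y - Z) i j)^2 = 0 := le_antisymm hYZ hYZnn
  ext i j
  have hrow : ∑ j, ((Y - Z) i j)^2 = 0 :=
    (Finset.sum_eq_zero_iff_of_nonneg
      (fun i _ => Finset.sum_nonneg fun j _ => sq_nonneg (((Y - Z) i j)))).mp hYZ0 i (mem_univ i)
  have hij : ((Y - Z) i j)^2 = 0 :=
    (Finset.sum_eq_zero_iff_of_nonneg (fun j _ => sq_nonneg _)).mp hrow j (mem_univ j)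
  have h0 : (Y - Z) i j = 0 := pow_eq_zero_iff two_ne_zero |>.mp hij
  rw [Matrix.sub_apply] at h0
  linarith


/-- Closed-form solution of `min_Y ‖X - Y‖_F² + λ‖Y‖_⋆²`: if `X = L S Rᵀ` is an SVD
of `X` with nonincreasing nonnegative singular values `σ`, `σ̄_d` the average of the
top `d` singular values, `d` the largest integer with `σ_d > (λd/(1+λd)) σ̄_d`, and
`μ = (λd/(1+λd)) σ̄_d`, then `Y = L S_μ Rᵀ` (soft-thresholding the singular values
at level `μ`) is the unique minimizer. -/
theorem nuclear_norm_squared_prox {m n : ℕ} (lam : ℝ) (hlam : 0 < lam)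
    (X : Matrix (Fin m) (Fin n) ℝ)
    (L : Matrix (Fin m) (Fin m) ℝ) (R : Matrix (Fin n) (Fin n) ℝ)
    (hL : Lᵀ * L = 1) (hR : Rᵀ * R = 1)
    (σ : ℕ → ℝ)
    (hσpos : ∀ i, i < min m n → 0 ≤ σ i)
    (hσmono : ∀ i j : ℕ, i ≤ j → j < min m n → σ j ≤ σ i)
    (S : Matrix (Fin m) (Fin n) ℝ)
    (hS : ∀ i j, S i j = if i.1 = j.1 then σ i.1 else 0)
    (hX : X = L * S * Rᵀ)
    (σbar : ℕ → ℝ) (hσbar : ∀ k : ℕ, σbar k = (∑ i ∈ range k, σ i) / k)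
    (d : ℕ) (hd1 : 1 ≤ d) (hd2 : d ≤ min m n)
    (hcond : lam * d / (1 + lam * d) * σbar d < σ (d - 1))
    (hmax : ∀ e : ℕ, d < e → e ≤ min m n →
      ¬ (lam * e / (1 + lam * e) * σbar e < σ (e - 1)))
    (μ : ℝ) (hμ : μ = lam * d / (1 + lam * d) * σbar d)
    (Sμ : Matrix (Fin m) (Fin n) ℝ)
    (hSμ : ∀ i j, Sμ i j = if i.1 = j.1 then max (σ i.1 - μ) 0 else 0)
    (Y : Matrix (Fin m) (Fin n) ℝ) (hY : Y = L * Sμ * Rᵀ) :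
    (∀ Z : Matrix (Fin m) (Fin n) ℝ,
        (∑ i, ∑ j, ((X - Y) i j) ^ 2) + lam * (nuclearNorm Y) ^ 2 ≤
          (∑ i, ∑ j, ((X - Z) i j) ^ 2) + lam * (nuclearNorm Z) ^ 2) ∧
      ∀ Z : Matrix (Fin m) (Fin n) ℝ,
        (∀ W : Matrix (Fin m) (Fin n) ℝ,
            (∑ i, ∑ j, ((X - Z) i j) ^ 2) + lam * (nuclearNorm Z) ^ 2 ≤
              (∑ i, ∑ j, ((X - W) i j) ^ 2) + lam * (nuclearNorm W) ^ 2) →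
          Z = Y := by
  classical
  set K := min m n with hK
  set t : ℕ → ℝ := fun i => max (σ i - μ) 0 with ht
  have htnn : ∀ i, 0 ≤ t i := fun i => le_max_right _ _
  have hμσ : μ < σ (d-1) := by rw [hμ]; exact hcond
  have hge : ∀ i, d ≤ i → i < K → σ i ≤ μ :=
    sigma_le_mu lam hlam σ σbar hσbar d hd1 hmax μ hμ
  have htlt : ∀ i, i < d → t i = σ i - μ := by
    intro i hid
    have h1 : σ (d-1) ≤ σ i := hσmono i (d-1) (by omega) (by omega)
    rw [ht]
    exact max_eq_left (by linarith)
  have ht0 : ∀ i, d ≤ i → i < K → t i = 0 := by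
    intro i h1 h2
    rw [ht]
    exact max_eq_right (by linarith [hge i h1 h2])
  have hcases : ∀ i ∈ range K, t i - σ i + μ = 0 ∨ (t i = 0 ∧ σ i ≤ μ) := by
    intro i hi
    simp only [mem_range] at hi
    by_cases h : i < d
    · left; rw [htlt i h]; ring
    · right; exact ⟨ht0 i (by omega) hi, hge i (by omega) hi⟩
  have hsumt : lam * (∑ i ∈ range K, t i) = μ := by
    have hsplit : ∑ i ∈ range K, t i = ∑ i ∈ range d, (σ i - μ) := by
      have e0 : ∑ i ∈ range K, t i = ∑ i ∈ range d, t i + ∑ i ∈ Ico d K, t i := by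
        rw [Finset.range_eq_Ico, ← Finset.sum_Ico_consecutive t (Nat.zero_le d) hd2, Finset.range_eq_Ico]
      have e1 : ∑ i ∈ Ico d K, t i = 0 := Finset.sum_eq_zero (fun i hi => by
        simp only [mem_Ico] at hi
        exact ht0 i hi.1 hi.2)
      have e2 : ∑ i ∈ range d, t i = ∑ i ∈ range d, (σ i - μ) :=
        Finset.sum_congr rfl fun i hi => htlt i (by simpa [mem_range] using hi)
      rw [e0, e1, e2, add_zero]
    rw [hsplit, Finset.sum_sub_distrib, Finset.sum_const, Finset.card_range, nsmul_eq_mul]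
    have hdpos : (0:ℝ) < d := by exact_mod_cast hd1
    have hden : (0:ℝ) < 1 + lam * d := by positivity
    have hμP : μ * (1 + lam * d) = lam * (∑ i ∈ range d, σ i) := by
      rw [hμ, hσbar]
      field_simp
    nlinarith [hμP]
  have hSμ' : ∀ (i : Fin m) (j : Fin n), Sμ i j = if (i:ℕ) = (j:ℕ) then t i.1 else 0 := by
    intro i j
    rw [hSμ, ht]
  have hSmSμ : ∀ (i : Fin m) (j : Fin n),
      (S - Sμ) i j = if (i:ℕ) = (j:ℕ) then (σ i.1 - t i.1) else 0 := by
    intro i j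
    rw [Matrix.sub_apply, hS, hSμ']
    by_cases h : (i:ℕ) = (j:ℕ)
    · rw [if_pos h, if_pos h, if_pos h]
    · rw [if_neg h, if_neg h, if_neg h, sub_zero]
  have hXY : X - Y = L * (S - Sμ) * Rᵀ := by
    rw [hX, hY, ← Matrix.sub_mul, ← Matrix.mul_sub]
  have hfrobY : ∑ i, ∑ j, ((X - Y) i j)^2 = ∑ i ∈ range K, (σ i - t i)^2 := by
    rw [hXY, frob_conj _ L R hL hR]
    exact frob_diag_pattern (fun i => σ i - t i) (S - Sμ) hSmSμ
  have hnnY : nuclearNorm Y = ∑ i ∈ range K, t i := by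
    rw [hY, nn_conj_eq Sμ L R hL hR]
    exact nn_diag_eq t (fun i _ => htnn i) Sμ hSμ'
  have part1 : ∀ Z : Matrix (Fin m) (Fin n) ℝ,
      (∑ i, ∑ j, ((X - Y) i j) ^ 2) + lam * (nuclearNorm Y) ^ 2 ≤
        (∑ i, ∑ j, ((X - Z) i j) ^ 2) + lam * (nuclearNorm Z) ^ 2 := by
    intro Z
    set W : Matrix (Fin m) (Fin n) ℝ := Lᵀ * Z * R with hW
    have hL2 : L * Lᵀ = 1 := mul_eq_one_comm.mp hL
    have hR2 : R * Rᵀ = 1 := mul_eq_one_comm.mp hR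
    have hZW : Z = L * W * Rᵀ := by
      rw [hW]
      calc Z = (L * Lᵀ) * Z * (R * Rᵀ) := by rw [hL2, hR2, Matrix.one_mul, Matrix.mul_one]
        _ = L * (Lᵀ * Z * R) * Rᵀ := by simp only [Matrix.mul_assoc]
    have hXZ : X - Z = L * (S - W) * Rᵀ := by
      rw [hX, hZW, ← Matrix.sub_mul, ← Matrix.mul_sub]
    have hfrobZ : ∑ i, ∑ j, ((X - Z) i j)^2 = ∑ i, ∑ j, ((S - W) i j)^2 := by
      rw [hXZ]
      exact frob_conj (S - W) L R hL hR
    have hnnZ : nuclearNorm Z = nuclearNorm W := by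
      rw [hZW]
      exact nn_conj_eq W L R hL hR
    obtain ⟨s, hs⟩ : ∃ s : ℕ → ℝ,
        s = fun i => if h : i < m ∧ i < n then max (W ⟨i, h.1⟩ ⟨i, h.2⟩) 0 else 0 := ⟨_, rfl⟩
    have hsnn : ∀ i, 0 ≤ s i := by
      intro i
      rw [hs]
      dsimp only
      split
      · exact le_max_right _ _
      · exact le_refl 0
    have hsle : ∑ i ∈ range K, s i ≤ nuclearNorm W := by
      apply diag_le_nn W s
      · intro i h1 h2
        have hmn : i < m ∧ i < n := ⟨h1, h2⟩
        rw [hs]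
        dsimp only
        rw [dif_pos hmn]
      · intro i hc
        rw [hs]
        dsimp only
        rw [dif_neg hc]
    have hfrob_ge : ∑ i ∈ range K, (σ i - s i)^2 ≤ ∑ i, ∑ j, ((S - W) i j)^2 := by
      apply diag_sq_le_frob (fun i j => ((S - W) i j)^2) (fun i j => sq_nonneg _)
      intro i h1 h2
      have hd : (S - W) ⟨i, h1⟩ ⟨i, h2⟩ = σ i - W ⟨i, h1⟩ ⟨i, h2⟩ := by
        rw [Matrix.sub_apply, hS, if_pos rfl]
      rw [hd]
      have hσi : 0 ≤ σ i := hσpos i (by omega)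
      have hmn : i < m ∧ i < n := ⟨h1, h2⟩
      rw [hs]
      dsimp only
      rw [dif_pos hmn]
      by_cases hw : 0 ≤ W ⟨i, h1⟩ ⟨i, h2⟩
      · rw [max_eq_left hw]
      · rw [max_eq_right (le_of_not_ge hw)]
        push_neg at hw
        nlinarith
    have hsum_s : 0 ≤ ∑ i ∈ range K, s i := Finset.sum_nonneg fun i _ => hsnn i
    have hnn_ge : (∑ i ∈ range K, s i)^2 ≤ (nuclearNorm W)^2 :=
      pow_le_pow_left₀ hsum_s hsle 2
    calc (∑ i, ∑ j, ((X - Y) i j) ^ 2) + lam * (nuclearNorm Y) ^ 2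
        = ∑ i ∈ range K, (σ i - t i)^2 + lam * (∑ i ∈ range K, t i)^2 := by
          rw [hfrobY, hnnY]
      _ ≤ ∑ i ∈ range K, (σ i - s i)^2 + lam * (∑ i ∈ range K, s i)^2 :=
          vec_min K lam hlam σ t μ hsumt hcases s (fun i _ => hsnn i)
      _ ≤ (∑ i, ∑ j, ((S - W) i j)^2) + lam * (nuclearNorm W)^2 :=
          add_le_add hfrob_ge (mul_le_mul_of_nonneg_left hnn_ge hlam.le)
      _ = (∑ i, ∑ j, ((X - Z) i j) ^ 2) + lam * (nuclearNorm Z) ^ 2 := by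
          rw [hfrobZ, hnnZ]
  exact ⟨part1, uniq lam hlam X Y part1⟩
end
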